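/- arXiv:1508.07021 — 5 statements merged into one kernel-verified Lean document; each statement's English description precedes it below -/
import Mathlib

section
/- For the generalized depolarizing Liouvillian L_σ with full-rank fixed point σ, the infimum over full-rank states ρ of D(σ‖ρ)/D(ρ‖σ) equals the infimum restricted to full-rank states ρ commuting with σ (where the quotient is extended continuously by value 1 at ρ = σ). -/
open Matrix MeasureTheory Filter
open scoped BigOperators ComplexOrder

noncomputable section

/-- Matrix logarithm of a Hermitian matrix via functional calculus (junk `0` otherwise). -/
def matLog {m : Type*} [Fintype m] [DecidableEq m] (A : Matrix m m ℂ) : Matrix m m ℂ :=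
  if h : A.IsHermitian then h.cfc Real.log else 0

/-- `ρ` is a quantum state (density matrix). -/
def IsState {m : Type*} [Fintype m] (ρ : Matrix m m ℂ) : Prop :=
  ρ.PosSemidef ∧ ρ.trace = 1

/-- `ρ` is a full-rank (positive definite) quantum state. -/
def IsFullRankState {m : Type*} [Fintype m] (ρ : Matrix m m ℂ) : Prop :=
  ρ.PosDef ∧ ρ.trace = 1

/-- Quantum relative entropy `D(ρ‖σ) = tr[ρ (log ρ - log σ)]`. -/
def relEnt {m : Type*} [Fintype m] [DecidableEq m] (ρ σ : Matrix m m ℂ) : ℝ :=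
  ((ρ * (matLog ρ - matLog σ)).trace).re

/-- von-Neumann entropy `S(ρ) = -tr[ρ log ρ]`. -/
def vnEntropy {m : Type*} [Fintype m] [DecidableEq m] (ρ : Matrix m m ℂ) : ℝ :=
  -((ρ * matLog ρ).trace).re

/-- eigenvalues of a matrix (junk `0` if not Hermitian). -/
def eigs {m : Type*} [Fintype m] [DecidableEq m] (A : Matrix m m ℂ) : m → ℝ :=
  if h : A.IsHermitian then h.eigenvalues else 0

/-- trace norm of a Hermitian matrix: sum of absolute values of eigenvalues. -/
def traceNorm {m : Type*} [Fintype m] [DecidableEq m] (A : Matrix m m ℂ) : ℝ :=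
  ∑ i, |eigs A i|

/-- smallest eigenvalue. -/
def smin {m : Type*} [Fintype m] [DecidableEq m] (A : Matrix m m ℂ) : ℝ := ⨅ i, eigs A i

/-- largest eigenvalue. -/
def smax {m : Type*} [Fintype m] [DecidableEq m] (A : Matrix m m ℂ) : ℝ := ⨆ i, eigs A i

/-- binary relative entropy. -/
def D2 (x y : ℝ) : ℝ := x * Real.log (x / y) + (1 - x) * Real.log ((1 - x) / (1 - y))

/-- continuous extension of `x ↦ D2 y x / D2 x y`, with value `1` at `x = y`. -/
def qfun (y x : ℝ) : ℝ := if x = y then 1 else D2 y x / D2 x y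

/-- `Q_σ(ρ)`: continuous extension of `D(σ‖ρ)/D(ρ‖σ)`, equal to `1` at `ρ = σ`. -/
def Qs {m : Type*} [Fintype m] [DecidableEq m] (σ ρ : Matrix m m ℂ) : ℝ :=
  if ρ = σ then 1 else relEnt σ ρ / relEnt ρ σ

end



noncomputable section
namespace Stmt3Aux
set_option linter.unusedSectionVars false
open Matrix
variable {n : Type*} [Fintype n] [DecidableEq n]

/-- diagonal complex matrix with real entries -/
def cdiag (r : n → ℝ) : Matrix n n ℂ := Matrix.diagonal (fun i => (r i : ℂ))

lemma cdiag_conjTranspose (r : n → ℝ) : (cdiag r)ᴴ = cdiag r := by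
  simp [cdiag, diagonal_conjTranspose]

lemma transport {a b : n → ℝ} {W : Matrix n n ℂ}
    (h : cdiag a * W = W * cdiag b) (f : ℝ → ℝ) :
    cdiag (fun i => f (a i)) * W = W * cdiag (fun j => f (b j)) := by
  ext i j
  have h' : (cdiag a * W) i j = (W * cdiag b) i j := by rw [h]
  simp only [cdiag, diagonal_mul, mul_diagonal] at h' ⊢
  rcases eq_or_ne (W i j) 0 with h0 | h0
  · simp [h0]
  · have hab : (a i : ℂ) = (b j : ℂ) := by
      rw [mul_comm (W i j) _] at h'
      exact mul_right_cancel₀ h0 h'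
    have : a i = b j := by exact_mod_cast hab
    rw [mul_comm, this]

lemma cfc_decomp {A V : Matrix n n ℂ} {r : n → ℝ} (hA : A.IsHermitian)
    (hV : V * Vᴴ = 1) (hV' : Vᴴ * V = 1)
    (hdec : A = V * cdiag r * Vᴴ) (f : ℝ → ℝ) :
    hA.cfc f = V * cdiag (fun i => f (r i)) * Vᴴ := by
  set U : Matrix n n ℂ := (hA.eigenvectorUnitary : Matrix n n ℂ) with hUdef
  have hU : U * Uᴴ = 1 := by
    have := Matrix.mem_unitaryGroup_iff.mp (hA.eigenvectorUnitary).2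
    simpa [Matrix.star_eq_conjTranspose] using this
  have hU' : Uᴴ * U = 1 := by
    have := Matrix.mem_unitaryGroup_iff'.mp (hA.eigenvectorUnitary).2
    simpa [Matrix.star_eq_conjTranspose] using this
  have hspec : A = U * cdiag hA.eigenvalues * Uᴴ := by
    have := hA.spectral_theorem
    simpa [Matrix.star_eq_conjTranspose, cdiag, Function.comp_def] using this
  have hkey : cdiag hA.eigenvalues * (Uᴴ * V) = (Uᴴ * V) * cdiag r := by
    have h1 : U * cdiag hA.eigenvalues * Uᴴ = V * cdiag r * Vᴴ := hspec.symm.trans hdec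
    calc cdiag hA.eigenvalues * (Uᴴ * V)
        = Uᴴ * (U * cdiag hA.eigenvalues * Uᴴ) * V := by
          simp only [← Matrix.mul_assoc, hU', Matrix.one_mul]
      _ = Uᴴ * (V * cdiag r * Vᴴ) * V := by rw [h1]
      _ = (Uᴴ * V) * cdiag r * (Vᴴ * V) := by simp only [Matrix.mul_assoc]
      _ = (Uᴴ * V) * cdiag r := by rw [hV', Matrix.mul_one]
  have hkey2 := transport hkey f
  have hcfc : hA.cfc f = U * cdiag (fun i => f (hA.eigenvalues i)) * Uᴴ := by
    show U * diagonal (RCLike.ofReal ∘ f ∘ hA.eigenvalues) * star U = _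
    simp [Matrix.star_eq_conjTranspose, cdiag, Function.comp_def]
  rw [hcfc]
  calc U * cdiag (fun i => f (hA.eigenvalues i)) * Uᴴ
      = U * cdiag (fun i => f (hA.eigenvalues i)) * ((Uᴴ * V) * Vᴴ) := by
        simp only [Matrix.mul_assoc, hV, Matrix.mul_one]
    _ = U * (cdiag (fun i => f (hA.eigenvalues i)) * (Uᴴ * V)) * Vᴴ := by
        simp only [Matrix.mul_assoc]
    _ = U * ((Uᴴ * V) * cdiag (fun j => f (r j))) * Vᴴ := by rw [hkey2]
    _ = (U * Uᴴ) * V * cdiag (fun j => f (r j)) * Vᴴ := by simp only [Matrix.mul_assoc]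
    _ = V * cdiag (fun j => f (r j)) * Vᴴ := by rw [hU, Matrix.one_mul]

lemma isHermitian_decomp {V : Matrix n n ℂ} (r : n → ℝ) :
    (V * cdiag r * Vᴴ).IsHermitian := by
  unfold Matrix.IsHermitian
  simp only [conjTranspose_mul, conjTranspose_conjTranspose, cdiag_conjTranspose]
  rw [Matrix.mul_assoc]

lemma matLog_decomp {A V : Matrix n n ℂ} {r : n → ℝ}
    (hV : V * Vᴴ = 1) (hV' : Vᴴ * V = 1)
    (hdec : A = V * cdiag r * Vᴴ) :
    matLog A = V * cdiag (fun i => Real.log (r i)) * Vᴴ := by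
  have hA : A.IsHermitian := hdec ▸ isHermitian_decomp r
  rw [matLog, dif_pos hA]
  exact cfc_decomp hA hV hV' hdec Real.log

lemma trace_conj {V B : Matrix n n ℂ} (hV' : Vᴴ * V = 1) :
    (V * B * Vᴴ).trace = B.trace := by
  rw [Matrix.trace_mul_cycle, hV', Matrix.one_mul]

lemma trace_core (W : Matrix n n ℂ) (p s : n → ℝ) :
    (cdiag p * (W * cdiag s * Wᴴ)).trace
      = ((∑ i, ∑ j, Complex.normSq (W i j) * (p i * s j) : ℝ) : ℂ) := by
  have key : ∀ i, (cdiag p * (W * cdiag s * Wᴴ)) i i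
      = (p i : ℂ) * ∑ j, W i j * (s j : ℂ) * star (W i j) := by
    intro i
    rw [show (cdiag p * (W * cdiag s * Wᴴ)) i i
        = (p i : ℂ) * ((W * cdiag s * Wᴴ)) i i from by
      simp [cdiag, diagonal_mul]]
    congr 1
    rw [Matrix.mul_apply]
    refine Finset.sum_congr rfl fun j _ => ?_
    rw [show (W * cdiag s) i j = W i j * (s j : ℂ) from by simp [cdiag, mul_diagonal],
      Matrix.conjTranspose_apply]
  calc (cdiag p * (W * cdiag s * Wᴴ)).trace
      = ∑ i, (p i : ℂ) * ∑ j, W i j * (s j : ℂ) * star (W i j) := by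
        rw [Matrix.trace]
        exact Finset.sum_congr rfl fun i _ => by rw [Matrix.diag_apply, key i]
    _ = ∑ i, ∑ j, ((Complex.normSq (W i j) * (p i * s j) : ℝ) : ℂ) := by
        refine Finset.sum_congr rfl fun i _ => ?_
        rw [Finset.mul_sum]
        refine Finset.sum_congr rfl fun j _ => ?_
        rw [Complex.star_def]
        push_cast
        rw [← Complex.mul_conj]
        ring
    _ = ((∑ i, ∑ j, Complex.normSq (W i j) * (p i * s j) : ℝ) : ℂ) := by
        push_cast
        rfl

lemma rowSum {W : Matrix n n ℂ} (hW : W * Wᴴ = 1) (i : n) :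
    ∑ j, Complex.normSq (W i j) = 1 := by
  have h : (W * Wᴴ) i i = 1 := by rw [hW, Matrix.one_apply_eq]
  rw [Matrix.mul_apply] at h
  have h2 : ((∑ j, Complex.normSq (W i j) : ℝ) : ℂ) = 1 := by
    rw [← h]
    push_cast
    refine Finset.sum_congr rfl fun j _ => ?_
    rw [conjTranspose_apply, Complex.star_def, Complex.mul_conj]
  exact_mod_cast h2

lemma colSum {W : Matrix n n ℂ} (hW' : Wᴴ * W = 1) (j : n) :
    ∑ i, Complex.normSq (W i j) = 1 := by
  have h : (Wᴴ * W) j j = 1 := by rw [hW', Matrix.one_apply_eq]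
  rw [Matrix.mul_apply] at h
  have h2 : ((∑ i, Complex.normSq (W i j) : ℝ) : ℂ) = 1 := by
    rw [← h]
    push_cast
    refine Finset.sum_congr rfl fun i _ => ?_
    rw [conjTranspose_apply, Complex.star_def, mul_comm, Complex.mul_conj]
  exact_mod_cast h2

lemma relEnt_eq {U V : Matrix n n ℂ} (hU : U * Uᴴ = 1) (hU' : Uᴴ * U = 1)
    (hV : V * Vᴴ = 1) (hV' : Vᴴ * V = 1) (p q : n → ℝ) :
    relEnt (U * cdiag p * Uᴴ) (V * cdiag q * Vᴴ)
      = ∑ i, ∑ j, Complex.normSq ((Uᴴ * V) i j)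
          * (p i * (Real.log (p i) - Real.log (q j))) := by
  set W := Uᴴ * V with hWdef
  have hWu : W * Wᴴ = 1 := by
    rw [hWdef, conjTranspose_mul, conjTranspose_conjTranspose]
    calc Uᴴ * V * (Vᴴ * U) = Uᴴ * (V * Vᴴ) * U := by simp only [Matrix.mul_assoc]
      _ = 1 := by rw [hV, Matrix.mul_one, hU']
  have hL1 : matLog (U * cdiag p * Uᴴ) = U * cdiag (fun i => Real.log (p i)) * Uᴴ :=
    matLog_decomp hU hU' rfl
  have hL2 : matLog (V * cdiag q * Vᴴ) = V * cdiag (fun j => Real.log (q j)) * Vᴴ :=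
    matLog_decomp hV hV' rfl
  have t1 : (U * cdiag p * Uᴴ * (U * cdiag (fun i => Real.log (p i)) * Uᴴ)).trace
      = ((∑ i, p i * Real.log (p i) : ℝ) : ℂ) := by
    have heq : U * cdiag p * Uᴴ * (U * cdiag (fun i => Real.log (p i)) * Uᴴ)
        = U * (cdiag p * cdiag (fun i => Real.log (p i))) * Uᴴ := by
      calc U * cdiag p * Uᴴ * (U * cdiag (fun i => Real.log (p i)) * Uᴴ)
          = U * (cdiag p * ((Uᴴ * U) * cdiag (fun i => Real.log (p i)))) * Uᴴ := by
            simp only [Matrix.mul_assoc]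
        _ = _ := by rw [hU', Matrix.one_mul]
    rw [heq, trace_conj hU']
    rw [show cdiag p * cdiag (fun i => Real.log (p i))
        = Matrix.diagonal (fun i => ((p i * Real.log (p i) : ℝ) : ℂ)) from by
      simp [cdiag, diagonal_mul_diagonal]]
    rw [Matrix.trace_diagonal]
    push_cast
    try rfl
  have t2 : (U * cdiag p * Uᴴ * (V * cdiag (fun j => Real.log (q j)) * Vᴴ)).trace
      = ((∑ i, ∑ j, Complex.normSq (W i j) * (p i * Real.log (q j)) : ℝ) : ℂ) := by
    have e1 : U * cdiag p * Uᴴ * (V * cdiag (fun j => Real.log (q j)) * Vᴴ)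
        = U * (cdiag p * (W * cdiag (fun j => Real.log (q j)) * Wᴴ)) * Uᴴ := by
      rw [hWdef, conjTranspose_mul, conjTranspose_conjTranspose]
      simp only [Matrix.mul_assoc, hV, Matrix.mul_one]
      rw [hU, Matrix.mul_one]
    rw [e1, trace_conj hU', trace_core]
  have expand : relEnt (U * cdiag p * Uᴴ) (V * cdiag q * Vᴴ)
      = (∑ i, p i * Real.log (p i))
        - ∑ i, ∑ j, Complex.normSq (W i j) * (p i * Real.log (q j)) := by
    rw [relEnt, hL1, hL2, Matrix.mul_sub, Matrix.trace_sub, t1, t2]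
    rw [← Complex.ofReal_sub, Complex.ofReal_re]
  rw [expand]
  symm
  have key : ∀ i, ∑ j, Complex.normSq (W i j) * (p i * (Real.log (p i) - Real.log (q j)))
      = p i * Real.log (p i) - ∑ j, Complex.normSq (W i j) * (p i * Real.log (q j)) := by
    intro i
    have hrow := rowSum hWu i
    have h3 : ∑ j, Complex.normSq (W i j) * (p i * (Real.log (p i) - Real.log (q j)))
        = (∑ j, Complex.normSq (W i j)) * (p i * Real.log (p i))
          - ∑ j, Complex.normSq (W i j) * (p i * Real.log (q j)) := by
      rw [Finset.sum_mul, ← Finset.sum_sub_distrib]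
      exact Finset.sum_congr rfl fun j _ => by ring
    rw [h3, hrow, one_mul]
  rw [Finset.sum_congr rfl fun i _ => key i, Finset.sum_sub_distrib]

lemma term_le {c p q : ℝ} (hc : 0 ≤ c) (hp : 0 < p) (hq : 0 < q) :
    c * (p - q) ≤ c * (p * (Real.log p - Real.log q)) := by
  apply mul_le_mul_of_nonneg_left _ hc
  have h := Real.log_le_sub_one_of_pos (x := q / p) (by positivity)
  rw [Real.log_div (ne_of_gt hq) (ne_of_gt hp)] at h
  have h2 : p * (Real.log q - Real.log p) ≤ p * (q / p - 1) :=
    mul_le_mul_of_nonneg_left h (le_of_lt hp)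
  have h3 : p * (q / p - 1) = q - p := by field_simp
  nlinarith

lemma term_lt {c p q : ℝ} (hc : 0 < c) (hp : 0 < p) (hq : 0 < q) (hne : p ≠ q) :
    c * (p - q) < c * (p * (Real.log p - Real.log q)) := by
  apply mul_lt_mul_of_pos_left _ hc
  have h := Real.log_lt_sub_one_of_pos (x := q / p) (by positivity)
    (by
      intro hcon
      apply hne
      field_simp at hcon
      linarith)
  rw [Real.log_div (ne_of_gt hq) (ne_of_gt hp)] at h
  have h2 : p * (Real.log q - Real.log p) < p * (q / p - 1) :=
    mul_lt_mul_of_pos_left h hp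
  have h3 : p * (q / p - 1) = q - p := by field_simp
  nlinarith

section Classical
variable (c : n → n → ℝ) (p q : n → ℝ)

lemma base_sum (hrow : ∀ i, ∑ j, c i j = 1) (hcol : ∀ j, ∑ i, c i j = 1)
    (hpq : ∑ i, p i = ∑ j, q j) :
    ∑ i, ∑ j, c i j * (p i - q j) = 0 := by
  have h1 : ∑ i, ∑ j, c i j * (p i - q j)
      = ∑ i, ∑ j, c i j * p i - ∑ i, ∑ j, c i j * q j := by
    rw [← Finset.sum_sub_distrib]
    refine Finset.sum_congr rfl fun i _ => ?_
    rw [← Finset.sum_sub_distrib]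
    exact Finset.sum_congr rfl fun j _ => by ring
  rw [h1]
  have h2 : ∑ i, ∑ j, c i j * p i = ∑ i, p i := by
    refine Finset.sum_congr rfl fun i _ => ?_
    rw [← Finset.sum_mul, hrow, one_mul]
  have h3 : ∑ i, ∑ j, c i j * q j = ∑ j, q j := by
    rw [Finset.sum_comm]
    refine Finset.sum_congr rfl fun j _ => ?_
    rw [← Finset.sum_mul, hcol, one_mul]
  rw [h2, h3, hpq, sub_self]

lemma dsum_nonneg (hc : ∀ i j, 0 ≤ c i j)
    (hrow : ∀ i, ∑ j, c i j = 1) (hcol : ∀ j, ∑ i, c i j = 1)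
    (hp : ∀ i, 0 < p i) (hq : ∀ j, 0 < q j) (hpq : ∑ i, p i = ∑ j, q j) :
    0 ≤ ∑ i, ∑ j, c i j * (p i * (Real.log (p i) - Real.log (q j))) := by
  rw [← base_sum c p q hrow hcol hpq]
  refine Finset.sum_le_sum fun i _ => Finset.sum_le_sum fun j _ => ?_
  exact term_le (hc i j) (hp i) (hq j)

lemma dsum_eq_zero (hc : ∀ i j, 0 ≤ c i j)
    (hrow : ∀ i, ∑ j, c i j = 1) (hcol : ∀ j, ∑ i, c i j = 1)
    (hp : ∀ i, 0 < p i) (hq : ∀ j, 0 < q j) (hpq : ∑ i, p i = ∑ j, q j)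
    (hzero : ∑ i, ∑ j, c i j * (p i * (Real.log (p i) - Real.log (q j))) = 0) :
    ∀ i j, c i j ≠ 0 → p i = q j := by
  intro i j hcij
  by_contra hne
  have hlt : ∑ i, ∑ j, c i j * (p i - q j)
      < ∑ i, ∑ j, c i j * (p i * (Real.log (p i) - Real.log (q j))) := by
    refine Finset.sum_lt_sum (fun i _ => Finset.sum_le_sum fun j _ =>
      term_le (hc i j) (hp i) (hq j)) ⟨i, Finset.mem_univ i, ?_⟩
    refine Finset.sum_lt_sum (fun j _ => term_le (hc i j) (hp i) (hq j))
      ⟨j, Finset.mem_univ j, ?_⟩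
    exact term_lt (lt_of_le_of_ne (hc i j) (Ne.symm hcij)) (hp i) (hq j) hne
  rw [base_sum c p q hrow hcol hpq, hzero] at hlt
  exact lt_irrefl 0 hlt
end Classical

lemma classical_pos {r q : n → ℝ} (hr : ∀ i, 0 < r i) (hq : ∀ i, 0 < q i)
    (hsum : ∑ i, r i = ∑ i, q i) (hne : r ≠ q) :
    0 < ∑ i, r i * (Real.log (r i) - Real.log (q i)) := by
  have base : ∑ i, (r i - q i) = 0 := by
    rw [Finset.sum_sub_distrib, hsum, sub_self]
  obtain ⟨k, hk⟩ : ∃ k, r k ≠ q k := Function.ne_iff.mp hne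
  calc (0:ℝ) = ∑ i, (r i - q i) := base.symm
    _ < ∑ i, r i * (Real.log (r i) - Real.log (q i)) := by
      refine Finset.sum_lt_sum (fun i _ => ?_) ⟨k, Finset.mem_univ k, ?_⟩
      · simpa using term_le (c := 1) zero_le_one (hr i) (hq i)
      · simpa using term_lt (c := 1) one_pos (hr k) (hq k) hk

lemma state_of_decomp {V : Matrix n n ℂ} (hV : V * Vᴴ = 1) (hV' : Vᴴ * V = 1)
    {r : n → ℝ} (hr : ∀ i, 0 < r i) (hsum : ∑ i, r i = 1) :
    IsFullRankState (V * cdiag r * Vᴴ) := by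
  constructor
  · refine Matrix.PosDef.of_dotProduct_mulVec_pos (isHermitian_decomp r) fun x hx => ?_
    have hD : (cdiag r).PosDef := by
      rw [cdiag]
      refine Matrix.posDef_diagonal_iff.mpr fun i => ?_
      exact_mod_cast hr i
    have hy : Vᴴ *ᵥ x ≠ 0 := by
      intro hcon
      apply hx
      have h2 : V *ᵥ (Vᴴ *ᵥ x) = x := by
        rw [Matrix.mulVec_mulVec, hV, Matrix.one_mulVec]
      rw [hcon, Matrix.mulVec_zero] at h2
      exact h2.symm
    have := hD.dotProduct_mulVec_pos hy
    simpa only [Matrix.mul_assoc, ← Matrix.mulVec_mulVec, star_mulVec, dotProduct_mulVec,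
      vecMul_vecMul, conjTranspose_conjTranspose] using this
  · rw [trace_conj hV', cdiag, Matrix.trace_diagonal]
    rw [show ∑ i, ((r i : ℝ) : ℂ) = ((∑ i, r i : ℝ) : ℂ) from by push_cast; rfl, hsum]
    norm_num

lemma state_decomp_exists {ρ : Matrix n n ℂ} (h : IsFullRankState ρ) :
    ∃ (U : Matrix n n ℂ) (p : n → ℝ), U * Uᴴ = 1 ∧ Uᴴ * U = 1 ∧
      ρ = U * cdiag p * Uᴴ ∧ (∀ i, 0 < p i) ∧ ∑ i, p i = 1 := by
  obtain ⟨hpd, htr⟩ := h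
  have hA : ρ.IsHermitian := hpd.isHermitian
  refine ⟨(hA.eigenvectorUnitary : Matrix n n ℂ), hA.eigenvalues, ?_, ?_, ?_, ?_, ?_⟩
  · simpa [Matrix.star_eq_conjTranspose] using
      Matrix.mem_unitaryGroup_iff.mp (hA.eigenvectorUnitary).2
  · simpa [Matrix.star_eq_conjTranspose] using
      Matrix.mem_unitaryGroup_iff'.mp (hA.eigenvectorUnitary).2
  · have := hA.spectral_theorem
    simpa [Matrix.star_eq_conjTranspose, cdiag, Function.comp_def] using this
  · exact fun i => hpd.eigenvalues_pos i
  · have hU' : (hA.eigenvectorUnitary : Matrix n n ℂ)ᴴ * (hA.eigenvectorUnitary : Matrix n n ℂ) = 1 := by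
      simpa [Matrix.star_eq_conjTranspose] using
        Matrix.mem_unitaryGroup_iff'.mp (hA.eigenvectorUnitary).2
    have hdec : ρ = (hA.eigenvectorUnitary : Matrix n n ℂ) * cdiag hA.eigenvalues *
        (hA.eigenvectorUnitary : Matrix n n ℂ)ᴴ := by
      have := hA.spectral_theorem
      simpa [Matrix.star_eq_conjTranspose, cdiag, Function.comp_def] using this
    have h2 : ((hA.eigenvectorUnitary : Matrix n n ℂ) * cdiag hA.eigenvalues *
        (hA.eigenvectorUnitary : Matrix n n ℂ)ᴴ).trace = ((∑ i, hA.eigenvalues i : ℝ) : ℂ) := by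
      rw [trace_conj hU', cdiag, Matrix.trace_diagonal]
      push_cast
      rfl
    rw [← hdec, htr] at h2
    exact_mod_cast h2.symm

lemma eq_of_overlap {U V : Matrix n n ℂ} (hU : U * Uᴴ = 1) (hU' : Uᴴ * U = 1)
    (hV : V * Vᴴ = 1) (hV' : Vᴴ * V = 1) {p q : n → ℝ}
    (hkey : ∀ i j, (Uᴴ * V) i j ≠ 0 → p i = q j) :
    U * cdiag p * Uᴴ = V * cdiag q * Vᴴ := by
  have hcomm : cdiag p * (Uᴴ * V) = (Uᴴ * V) * cdiag q := by
    ext i j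
    simp only [cdiag, diagonal_mul, mul_diagonal]
    rcases eq_or_ne ((Uᴴ * V) i j) 0 with h0 | h0
    · simp [h0]
    · rw [hkey i j h0, mul_comm]
  calc U * cdiag p * Uᴴ
      = U * cdiag p * ((Uᴴ * V) * Vᴴ) := by
        simp only [Matrix.mul_assoc, hV, Matrix.mul_one]
    _ = U * (cdiag p * (Uᴴ * V)) * Vᴴ := by simp only [Matrix.mul_assoc]
    _ = U * ((Uᴴ * V) * cdiag q) * Vᴴ := by rw [hcomm]
    _ = (U * Uᴴ) * V * cdiag q * Vᴴ := by simp only [Matrix.mul_assoc]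
    _ = V * cdiag q * Vᴴ := by rw [hU, Matrix.one_mul]

lemma relEnt_diag {V : Matrix n n ℂ} (hV : V * Vᴴ = 1) (hV' : Vᴴ * V = 1) (r q : n → ℝ) :
    relEnt (V * cdiag r * Vᴴ) (V * cdiag q * Vᴴ)
      = ∑ i, r i * (Real.log (r i) - Real.log (q i)) := by
  rw [relEnt_eq hV hV' hV hV']
  rw [hV']
  refine Finset.sum_congr rfl fun i _ => ?_
  rw [Finset.sum_eq_single i]
  · simp [Matrix.one_apply_eq]
  · intro j _ hj
    simp [Matrix.one_apply_ne (Ne.symm hj)]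
  · intro h
    exact absurd (Finset.mem_univ i) h

lemma decomp_inj {V : Matrix n n ℂ} (hV : V * Vᴴ = 1) (hV' : Vᴴ * V = 1) {r q : n → ℝ}
    (h : V * cdiag r * Vᴴ = V * cdiag q * Vᴴ) : r = q := by
  have h2 : cdiag r = cdiag q := by
    calc cdiag r = Vᴴ * (V * cdiag r * Vᴴ) * V := by
          simp only [← Matrix.mul_assoc, hV', Matrix.one_mul]
          simp only [Matrix.mul_assoc, hV', Matrix.mul_one]
      _ = Vᴴ * (V * cdiag q * Vᴴ) * V := by rw [h]
      _ = cdiag q := by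
          simp only [← Matrix.mul_assoc, hV', Matrix.one_mul]
          simp only [Matrix.mul_assoc, hV', Matrix.mul_one]
  funext i
  have h3 := congrFun (congrFun h2 i) i
  simp only [cdiag, Matrix.diagonal_apply_eq] at h3
  exact_mod_cast h3

lemma mulW1 {U V : Matrix n n ℂ} (hU' : Uᴴ * U = 1) (hV : V * Vᴴ = 1) :
    (Uᴴ * V) * (Uᴴ * V)ᴴ = 1 := by
  rw [conjTranspose_mul, conjTranspose_conjTranspose]
  calc Uᴴ * V * (Vᴴ * U) = Uᴴ * (V * Vᴴ) * U := by simp only [Matrix.mul_assoc]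
    _ = 1 := by rw [hV, Matrix.mul_one, hU']

lemma mulW2 {U V : Matrix n n ℂ} (hU : U * Uᴴ = 1) (hV' : Vᴴ * V = 1) :
    (Uᴴ * V)ᴴ * (Uᴴ * V) = 1 := by
  rw [conjTranspose_mul, conjTranspose_conjTranspose]
  calc Vᴴ * U * (Uᴴ * V) = Vᴴ * (U * Uᴴ) * V := by simp only [Matrix.mul_assoc]
    _ = 1 := by rw [hU, Matrix.mul_one, hV']

lemma relEnt_nonneg {ρ τ : Matrix n n ℂ} (hρ : IsFullRankState ρ) (hτ : IsFullRankState τ) :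
    0 ≤ relEnt ρ τ := by
  obtain ⟨U, p, hU, hU', hρd, hp, hps⟩ := state_decomp_exists hρ
  obtain ⟨V, q, hV, hV', hτd, hq, hqs⟩ := state_decomp_exists hτ
  rw [hρd, hτd, relEnt_eq hU hU' hV hV']
  exact dsum_nonneg _ p q (fun i j => Complex.normSq_nonneg _)
    (rowSum (mulW1 hU' hV)) (colSum (mulW2 hU hV')) hp hq (by rw [hps, hqs])

lemma relEnt_pos_of_ne {ρ τ : Matrix n n ℂ} (hρ : IsFullRankState ρ)
    (hτ : IsFullRankState τ) (hne : ρ ≠ τ) : 0 < relEnt ρ τ := by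
  obtain ⟨U, p, hU, hU', hρd, hp, hps⟩ := state_decomp_exists hρ
  obtain ⟨V, q, hV, hV', hτd, hq, hqs⟩ := state_decomp_exists hτ
  rw [hρd, hτd, relEnt_eq hU hU' hV hV']
  rcases (dsum_nonneg (fun i j => Complex.normSq ((Uᴴ * V) i j)) p q
    (fun i j => Complex.normSq_nonneg _) (rowSum (mulW1 hU' hV)) (colSum (mulW2 hU hV'))
    hp hq (by rw [hps, hqs])).lt_or_eq with hlt | heq
  · exact hlt
  · exfalso
    apply hne
    rw [hρd, hτd]
    apply eq_of_overlap hU hU' hV hV'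
    intro i j hij
    refine dsum_eq_zero (fun i j => Complex.normSq ((Uᴴ * V) i j)) p q
      (fun i j => Complex.normSq_nonneg _) (rowSum (mulW1 hU' hV)) (colSum (mulW2 hU hV'))
      hp hq (by rw [hps, hqs]) heq.symm i j ?_
    simpa [Complex.normSq_eq_zero] using hij

lemma perm_sum (e : Equiv.Perm n) (f : n → n → ℝ) :
    ∑ i, ∑ j, (e.permMatrix ℝ) i j * f i j = ∑ i, f i (e i) := by
  refine Finset.sum_congr rfl fun i _ => ?_
  rw [Finset.sum_eq_single (e i)]
  · simp [Equiv.Perm.permMatrix, PEquiv.toMatrix_apply, Equiv.toPEquiv_apply]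
  · intro j _ hj
    simp [Equiv.Perm.permMatrix, PEquiv.toMatrix_apply, Equiv.toPEquiv_apply, Ne.symm hj]
  · intro h
    exact absurd (Finset.mem_univ (e i)) h

end Stmt3Aux
end

/-- the infimum of `Q_σ` over full-rank states is attained among
states commuting with `σ`. -/
theorem stmt3 {d : ℕ} (σ : Matrix (Fin d) (Fin d) ℂ) (hσ : IsFullRankState σ) :
    (⨅ ρ : {ρ : Matrix (Fin d) (Fin d) ℂ // IsFullRankState ρ}, Qs σ ρ.1)
      = ⨅ ρ : {ρ : Matrix (Fin d) (Fin d) ℂ // IsFullRankState ρ ∧ ρ * σ = σ * ρ},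
          Qs σ ρ.1 := by
  classical
  obtain ⟨V, q, hV, hV', hσd, hq, hqs⟩ := Stmt3Aux.state_decomp_exists hσ
  haveI hne1 : Nonempty {ρ : Matrix (Fin d) (Fin d) ℂ // IsFullRankState ρ} := ⟨⟨σ, hσ⟩⟩
  haveI hne2 : Nonempty {ρ : Matrix (Fin d) (Fin d) ℂ // IsFullRankState ρ ∧ ρ * σ = σ * ρ} :=
    ⟨⟨σ, hσ, rfl⟩⟩
  have hQnonneg : ∀ ρ : Matrix (Fin d) (Fin d) ℂ, IsFullRankState ρ → 0 ≤ Qs σ ρ := by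
    intro ρ hρ
    rw [Qs]
    split
    · exact zero_le_one
    · exact div_nonneg (Stmt3Aux.relEnt_nonneg hσ hρ) (Stmt3Aux.relEnt_nonneg hρ hσ)
  have hbdd1 : BddBelow (Set.range
      fun ρ : {ρ : Matrix (Fin d) (Fin d) ℂ // IsFullRankState ρ} => Qs σ ρ.1) := by
    refine ⟨0, ?_⟩
    rintro x ⟨ρ, rfl⟩
    exact hQnonneg ρ.1 ρ.2
  have hbdd2 : BddBelow (Set.range
      fun ρ : {ρ : Matrix (Fin d) (Fin d) ℂ // IsFullRankState ρ ∧ ρ * σ = σ * ρ} =>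
        Qs σ ρ.1) := by
    refine ⟨0, ?_⟩
    rintro x ⟨ρ, rfl⟩
    exact hQnonneg ρ.1 ρ.2.1
  set m := ⨅ ρ : {ρ : Matrix (Fin d) (Fin d) ℂ // IsFullRankState ρ ∧ ρ * σ = σ * ρ},
      Qs σ ρ.1 with hm
  have hcb : ∀ r : Fin d → ℝ, (∀ i, 0 < r i) → (∑ i, r i = 1) →
      m * (∑ i, r i * (Real.log (r i) - Real.log (q i)))
        ≤ ∑ i, q i * (Real.log (q i) - Real.log (r i)) := by
    intro r hr hrs
    by_cases hrq : r = q
    · subst hrq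
      simp
    · have hτs : IsFullRankState (V * Stmt3Aux.cdiag r * Vᴴ) :=
        Stmt3Aux.state_of_decomp hV hV' hr hrs
      have hmul : ∀ a b : Fin d → ℝ, (V * Stmt3Aux.cdiag a * Vᴴ) * (V * Stmt3Aux.cdiag b * Vᴴ)
          = V * (Stmt3Aux.cdiag a * Stmt3Aux.cdiag b) * Vᴴ := by
        intro a b
        calc (V * Stmt3Aux.cdiag a * Vᴴ) * (V * Stmt3Aux.cdiag b * Vᴴ)
            = V * (Stmt3Aux.cdiag a * ((Vᴴ * V) * Stmt3Aux.cdiag b)) * Vᴴ := by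
              simp only [Matrix.mul_assoc]
          _ = _ := by rw [hV', Matrix.one_mul]
      have hτc : (V * Stmt3Aux.cdiag r * Vᴴ) * σ = σ * (V * Stmt3Aux.cdiag r * Vᴴ) := by
        rw [hσd, hmul, hmul]
        have hXY : Stmt3Aux.cdiag r * Stmt3Aux.cdiag q = Stmt3Aux.cdiag q * Stmt3Aux.cdiag r := by
          simp only [Stmt3Aux.cdiag, Matrix.diagonal_mul_diagonal]
          rw [show (fun i => ((r i : ℂ)) * ((q i : ℂ))) = (fun i => ((q i : ℂ)) * ((r i : ℂ)))
            from funext fun i => mul_comm _ _]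
        rw [hXY]
      have hτne : V * Stmt3Aux.cdiag r * Vᴴ ≠ σ := by
        intro hcon
        exact hrq (Stmt3Aux.decomp_inj hV hV' (hcon.trans hσd))
      have hpos : 0 < ∑ i, r i * (Real.log (r i) - Real.log (q i)) :=
        Stmt3Aux.classical_pos hr hq (by rw [hrs, hqs]) hrq
      have hQτ : Qs σ (V * Stmt3Aux.cdiag r * Vᴴ)
          = (∑ i, q i * (Real.log (q i) - Real.log (r i)))
            / (∑ i, r i * (Real.log (r i) - Real.log (q i))) := by
        rw [Qs, if_neg hτne]
        congr 1
        · conv_lhs => rw [hσd]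
          exact Stmt3Aux.relEnt_diag hV hV' q r
        · conv_lhs => rw [hσd]
          exact Stmt3Aux.relEnt_diag hV hV' r q
      have hmle : m ≤ Qs σ (V * Stmt3Aux.cdiag r * Vᴴ) := by
        rw [hm]
        exact ciInf_le hbdd2 ⟨V * Stmt3Aux.cdiag r * Vᴴ, hτs, hτc⟩
      calc m * (∑ i, r i * (Real.log (r i) - Real.log (q i)))
          ≤ Qs σ (V * Stmt3Aux.cdiag r * Vᴴ)
            * (∑ i, r i * (Real.log (r i) - Real.log (q i))) :=
            mul_le_mul_of_nonneg_right hmle hpos.le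
        _ = ∑ i, q i * (Real.log (q i) - Real.log (r i)) := by
            rw [hQτ, div_mul_cancel₀ _ (ne_of_gt hpos)]
  apply le_antisymm
  · exact le_ciInf fun τ => ciInf_le hbdd1 ⟨τ.1, τ.2.1⟩
  · refine le_ciInf fun ρp => ?_
    obtain ⟨ρ, hρs⟩ := ρp
    show m ≤ Qs σ ρ
    by_cases hρσ : ρ = σ
    · have h1 : m ≤ Qs σ σ := ciInf_le hbdd2 ⟨σ, hσ, rfl⟩
      rw [hρσ]
      exact h1
    · obtain ⟨U, p, hU, hU', hρd, hp, hps⟩ := Stmt3Aux.state_decomp_exists hρs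
      have hrow := Stmt3Aux.rowSum (Stmt3Aux.mulW1 hU' hV)
      have hcol := Stmt3Aux.colSum (Stmt3Aux.mulW2 hU hV')
      have hden : relEnt ρ σ
          = ∑ i, ∑ j, Complex.normSq ((Uᴴ * V) i j)
              * (p i * (Real.log (p i) - Real.log (q j))) := by
        conv_lhs => rw [hρd, hσd]
        exact Stmt3Aux.relEnt_eq hU hU' hV hV' p q
      have hnum : relEnt σ ρ
          = ∑ i, ∑ j, Complex.normSq ((Uᴴ * V) i j)
              * (q j * (Real.log (q j) - Real.log (p i))) := by
        conv_lhs => rw [hσd, hρd]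
        rw [Stmt3Aux.relEnt_eq hV hV' hU hU' q p]
        rw [Finset.sum_comm]
        refine Finset.sum_congr rfl fun i _ => Finset.sum_congr rfl fun j _ => ?_
        congr 1
        have hentry : (Vᴴ * U) j i = star ((Uᴴ * V) i j) := by
          rw [show Uᴴ * V = (Vᴴ * U)ᴴ from by
            rw [Matrix.conjTranspose_mul, Matrix.conjTranspose_conjTranspose]]
          rw [Matrix.conjTranspose_apply, star_star]
        rw [hentry, Complex.star_def, Complex.normSq_conj]
      have hdpos : 0 < relEnt ρ σ := Stmt3Aux.relEnt_pos_of_ne hρs hσ hρσ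
      have hkey : m * relEnt ρ σ ≤ relEnt σ ρ := by
        rw [hden, hnum]
        have hC : (Matrix.of fun i j => Complex.normSq ((Uᴴ * V) i j))
            ∈ doublyStochastic ℝ (Fin d) := by
          rw [mem_doublyStochastic_iff_sum]
          exact ⟨fun i j => Complex.normSq_nonneg _, hrow, hcol⟩
        obtain ⟨w, hw0, hw1, hwsum⟩ := exists_eq_sum_perm_of_mem_doublyStochastic hC
        have hcval : ∀ i j, Complex.normSq ((Uᴴ * V) i j)
            = ∑ e : Equiv.Perm (Fin d), w e * (e.permMatrix ℝ) i j := by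
          intro i j
          have h3 := congrFun (congrFun hwsum i) j
          simpa [Matrix.sum_apply, Matrix.smul_apply, Matrix.of_apply] using h3.symm
        have hperm : ∀ e : Equiv.Perm (Fin d),
            0 ≤ ∑ i, ((q (e i) * (Real.log (q (e i)) - Real.log (p i)))
              - m * (p i * (Real.log (p i) - Real.log (q (e i))))) := by
          intro e
          have hr : ∀ j, 0 < p (e.symm j) := fun j => hp (e.symm j)
          have hrs : ∑ j, p (e.symm j) = 1 := by
            rw [Equiv.sum_comp e.symm p]
            exact hps
          have hA : ∑ i, q (e i) * (Real.log (q (e i)) - Real.log (p i))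
              = ∑ j, q j * (Real.log (q j) - Real.log (p (e.symm j))) := by
            rw [← Equiv.sum_comp e (fun j => q j * (Real.log (q j) - Real.log (p (e.symm j))))]
            refine Finset.sum_congr rfl fun i _ => ?_
            rw [Equiv.symm_apply_apply]
          have hB : ∑ i, p i * (Real.log (p i) - Real.log (q (e i)))
              = ∑ j, p (e.symm j) * (Real.log (p (e.symm j)) - Real.log (q j)) := by
            rw [← Equiv.sum_comp e
              (fun j => p (e.symm j) * (Real.log (p (e.symm j)) - Real.log (q j)))]
            refine Finset.sum_congr rfl fun i _ => ?_
            rw [Equiv.symm_apply_apply]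
          have hsplit : ∑ i, ((q (e i) * (Real.log (q (e i)) - Real.log (p i)))
              - m * (p i * (Real.log (p i) - Real.log (q (e i)))))
              = (∑ i, q (e i) * (Real.log (q (e i)) - Real.log (p i)))
                - m * ∑ i, p i * (Real.log (p i) - Real.log (q (e i))) := by
            rw [Finset.mul_sum, ← Finset.sum_sub_distrib]
          have hbound := hcb (fun j => p (e.symm j)) hr hrs
          rw [hsplit, hA, hB]
          linarith
        have expand : ∑ i, ∑ j, Complex.normSq ((Uᴴ * V) i j)
            * ((q j * (Real.log (q j) - Real.log (p i)))
              - m * (p i * (Real.log (p i) - Real.log (q j))))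
            = (∑ i, ∑ j, Complex.normSq ((Uᴴ * V) i j)
                * (q j * (Real.log (q j) - Real.log (p i))))
              - m * (∑ i, ∑ j, Complex.normSq ((Uᴴ * V) i j)
                * (p i * (Real.log (p i) - Real.log (q j)))) := by
          rw [Finset.mul_sum, ← Finset.sum_sub_distrib]
          refine Finset.sum_congr rfl fun i _ => ?_
          rw [Finset.mul_sum, ← Finset.sum_sub_distrib]
          exact Finset.sum_congr rfl fun j _ => by ring
        have main : 0 ≤ ∑ i, ∑ j, Complex.normSq ((Uᴴ * V) i j)
            * ((q j * (Real.log (q j) - Real.log (p i)))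
              - m * (p i * (Real.log (p i) - Real.log (q j)))) := by
          have step1 : ∑ i, ∑ j, Complex.normSq ((Uᴴ * V) i j)
              * ((q j * (Real.log (q j) - Real.log (p i)))
                - m * (p i * (Real.log (p i) - Real.log (q j))))
              = ∑ e : Equiv.Perm (Fin d), w e * ∑ i,
                  ((q (e i) * (Real.log (q (e i)) - Real.log (p i)))
                    - m * (p i * (Real.log (p i) - Real.log (q (e i))))) := by
            have h4 : ∀ i j, Complex.normSq ((Uᴴ * V) i j)
                * ((q j * (Real.log (q j) - Real.log (p i)))
                  - m * (p i * (Real.log (p i) - Real.log (q j))))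
                = ∑ e : Equiv.Perm (Fin d), w e * ((e.permMatrix ℝ) i j
                    * ((q j * (Real.log (q j) - Real.log (p i)))
                      - m * (p i * (Real.log (p i) - Real.log (q j))))) := by
              intro i j
              rw [hcval i j, Finset.sum_mul]
              exact Finset.sum_congr rfl fun e _ => by ring
            rw [Finset.sum_congr rfl fun i (_ : i ∈ Finset.univ) =>
              Finset.sum_congr rfl fun j (_ : j ∈ Finset.univ) => h4 i j]
            rw [Finset.sum_congr rfl fun i (_ : i ∈ Finset.univ) =>
              Finset.sum_comm (s := Finset.univ) (t := Finset.univ)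
                (f := fun j e => w e * ((e.permMatrix ℝ) i j
                  * ((q j * (Real.log (q j) - Real.log (p i)))
                    - m * (p i * (Real.log (p i) - Real.log (q j)))))), Finset.sum_comm]
            refine Finset.sum_congr rfl fun e _ => ?_
            rw [Finset.mul_sum]
            refine Finset.sum_congr rfl fun i _ => ?_
            have h5 : ∑ j, (e.permMatrix ℝ) i j
                * ((q j * (Real.log (q j) - Real.log (p i)))
                  - m * (p i * (Real.log (p i) - Real.log (q j))))
                = (q (e i) * (Real.log (q (e i)) - Real.log (p i)))
                  - m * (p i * (Real.log (p i) - Real.log (q (e i)))) := by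
              rw [Finset.sum_eq_single (e i)]
              · simp [Equiv.Perm.permMatrix, PEquiv.toMatrix_apply, Equiv.toPEquiv_apply]
              · intro j _ hj
                simp [Equiv.Perm.permMatrix, PEquiv.toMatrix_apply, Equiv.toPEquiv_apply,
                  Ne.symm hj]
              · intro h
                exact absurd (Finset.mem_univ (e i)) h
            rw [← Finset.mul_sum, h5]
          rw [step1]
          exact Finset.sum_nonneg fun e _ => mul_nonneg (hw0 e) (hperm e)
        rw [expand] at main
        linarith
      rw [Qs, if_neg hρσ]
      exact (le_div_iff₀ hdpos).mpr hkey
end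

section
/- For each fixed x ∈ (0,1), the function f_x: [0,1] → R given by f_x(y) = D_2(y‖x)/D_2(x‖y) for y ∉ {0, x, 1}, extended by f_x(x) = 1 and f_x(0) = f_x(1) = 0, is quasi-concave, i.e. unimodal: there exists m ∈ (0,1) such that f_x is monotonically increasing on [0,m) and monotonically decreasing on (m,1]. -/
open Matrix MeasureTheory Filter
open scoped BigOperators ComplexOrder

/-- `f_x(y)`: the quotient `D₂(y‖x)/D₂(x‖y)` extended by `f_x(x) = 1`,
`f_x(0) = f_x(1) = 0`. -/
noncomputable def fext (x y : ℝ) : ℝ :=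
  if y = 0 ∨ y = 1 then 0 else if y = x then 1 else D2 y x / D2 x y


open Real Set

namespace Stmt6Aux

noncomputable def Phi (x t y : ℝ) : ℝ := D2 y x - t * D2 x y
noncomputable def PhiD (x t y : ℝ) : ℝ :=
  Real.log y - Real.log (1-y) - Real.log x + Real.log (1-x) + t*x/y - t*(1-x)/(1-y)
noncomputable def PhiDD (x t y : ℝ) : ℝ := 1/y + 1/(1-y) - t*x/y^2 - t*(1-x)/(1-y)^2
def psi (x t y : ℝ) : ℝ := y*(1-y) - t*x*(1-y)^2 - t*(1-x)*y^2

variable {x t y : ℝ}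

lemma D2_reflect (x y : ℝ) : D2 (1-x) (1-y) = D2 x y := by
  simp only [D2, sub_sub_cancel]; ring

lemma D2_expand (hx : x ∈ Ioo (0:ℝ) 1) (hy : y ∈ Ioo (0:ℝ) 1) :
    D2 x y = x * Real.log x - x * Real.log y + (1-x) * Real.log (1-x) - (1-x) * Real.log (1-y) := by
  rw [D2, Real.log_div hx.1.ne' hy.1.ne',
    Real.log_div (by linarith [hx.2] : (1:ℝ)-x ≠ 0) (by linarith [hy.2] : (1:ℝ)-y ≠ 0)]
  ring

lemma D2_self (hx : x ∈ Ioo (0:ℝ) 1) : D2 x x = 0 := by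
  rw [D2, div_self hx.1.ne', div_self (by linarith [hx.2] : (1:ℝ)-x ≠ 0), Real.log_one]; ring

lemma D2_pos (hx : x ∈ Ioo (0:ℝ) 1) (hy : y ∈ Ioo (0:ℝ) 1) (hne : x ≠ y) : 0 < D2 x y := by
  obtain ⟨hx0, hx1⟩ := hx
  obtain ⟨hy0, hy1⟩ := hy
  have h1 : Real.log (y/x) < y/x - 1 := by
    apply Real.log_lt_sub_one_of_pos (by positivity)
    intro h
    exact hne (by field_simp at h; linarith)
  have h2 : Real.log ((1-y)/(1-x)) ≤ (1-y)/(1-x) - 1 :=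
    Real.log_le_sub_one_of_pos (by apply div_pos <;> linarith)
  have e1 : Real.log (x/y) = - Real.log (y/x) := by
    rw [← Real.log_inv]; congr 1; field_simp
  have e2 : Real.log ((1-x)/(1-y)) = - Real.log ((1-y)/(1-x)) := by
    rw [← Real.log_inv]; congr 1; field_simp
  rw [D2, e1, e2]
  have h1' : x * Real.log (y/x) < x * (y/x - 1) := (mul_lt_mul_iff_right₀ hx0).2 h1
  have h2' : (1-x) * Real.log ((1-y)/(1-x)) ≤ (1-x) * ((1-y)/(1-x) - 1) :=
    mul_le_mul_of_nonneg_left h2 (by linarith)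
  have e3 : x * (y/x - 1) = y - x := by field_simp
  have e4 : (1-x) * ((1-y)/(1-x) - 1) = x - y := by
    have : (1:ℝ)-x ≠ 0 := by linarith
    field_simp
    ring
  nlinarith
lemma Phi_expand (hx : x ∈ Ioo (0:ℝ) 1) (hy : y ∈ Ioo (0:ℝ) 1) :
    Phi x t y = (y * Real.log y - y * Real.log x + (1-y) * Real.log (1-y) - (1-y) * Real.log (1-x))
      - t * (x * Real.log x - x * Real.log y + (1-x) * Real.log (1-x) - (1-x) * Real.log (1-y)) := by
  rw [Phi, D2_expand hy hx, D2_expand hx hy]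

lemma hasDerivAt_Phi (hx : x ∈ Ioo (0:ℝ) 1) (hy : y ∈ Ioo (0:ℝ) 1) :
    HasDerivAt (Phi x t) (PhiD x t y) y := by
  have hy0 : y ≠ 0 := hy.1.ne'
  have hy1 : (1:ℝ) - y ≠ 0 := by have := hy.2; intro h; linarith
  have h1 : HasDerivAt (fun y : ℝ => y * Real.log y) (Real.log y + 1) y :=
    Real.hasDerivAt_mul_log hy0
  have hid : HasDerivAt (fun y : ℝ => 1 - y) (-1) y := by
    simpa using (hasDerivAt_id y).const_sub 1
  have h2 : HasDerivAt (fun y : ℝ => (1-y) * Real.log (1-y)) ((Real.log (1-y) + 1) * (-1)) y :=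
    (Real.hasDerivAt_mul_log hy1).comp y hid
  have h3 : HasDerivAt (fun y : ℝ => Real.log y) (1/y) y := by
    simpa [one_div] using Real.hasDerivAt_log hy0
  have h4 : HasDerivAt (fun y : ℝ => Real.log (1-y)) ((1/(1-y)) * (-1)) y := by
    have := (Real.hasDerivAt_log hy1).comp y hid
    simpa [one_div, Function.comp_def] using this
  have hG : HasDerivAt (fun y : ℝ => y * Real.log y - y * Real.log x
      + (1-y) * Real.log (1-y) - (1-y) * Real.log (1-x))
      ((Real.log y + 1) - Real.log x + (Real.log (1-y) + 1) * (-1) - (-1) * Real.log (1-x)) y := by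
    have := (((h1.sub ((hasDerivAt_id y).mul_const (Real.log x))).add h2).sub
      (hid.mul_const (Real.log (1-x))))
    simpa [Pi.sub_def, Pi.add_def] using this
  have hH : HasDerivAt (fun y : ℝ => x * Real.log x - x * Real.log y
      + (1-x) * Real.log (1-x) - (1-x) * Real.log (1-y))
      (0 - x * (1/y) + 0 - (1-x) * ((1/(1-y)) * (-1))) y := by
    exact (((hasDerivAt_const y _).sub (h3.const_mul x)).add (hasDerivAt_const y _)).sub
      (h4.const_mul (1-x))
  have hFull := hG.sub (hH.const_mul t)
  have heq : ((Real.log y + 1) - Real.log x + (Real.log (1-y) + 1) * (-1) - (-1) * Real.log (1-x))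
      - t * (0 - x * (1/y) + 0 - (1-x) * ((1/(1-y)) * (-1))) = PhiD x t y := by
    rw [PhiD]
    have hy0 : y ≠ 0 := hy.1.ne'
    have hy1 : (1:ℝ) - y ≠ 0 := by have := hy.2; intro h; linarith
    field_simp
    ring
  rw [heq] at hFull
  apply hFull.congr_of_eventuallyEq
  filter_upwards [Ioo_mem_nhds hy.1 hy.2] with z hz
  rw [Phi_expand hx hz]; rfl

lemma hasDerivAt_PhiD (hx : x ∈ Ioo (0:ℝ) 1) (hy : y ∈ Ioo (0:ℝ) 1) :
    HasDerivAt (PhiD x t) (PhiDD x t y) y := by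
  have hy0 : y ≠ 0 := hy.1.ne'
  have hy1 : (1:ℝ) - y ≠ 0 := by have := hy.2; intro h; linarith
  have hid : HasDerivAt (fun y : ℝ => 1 - y) (-1) y := by
    simpa using (hasDerivAt_id y).const_sub 1
  have h3 : HasDerivAt (fun y : ℝ => Real.log y) (1/y) y := by
    simpa [one_div] using Real.hasDerivAt_log hy0
  have h4 : HasDerivAt (fun y : ℝ => Real.log (1-y)) ((1/(1-y)) * (-1)) y := by
    have := (Real.hasDerivAt_log hy1).comp y hid
    simpa [one_div, Function.comp_def] using this
  have h5 : HasDerivAt (fun y : ℝ => t*x/y) (t*x * (-(y^2)⁻¹)) y := by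
    have : HasDerivAt (fun y : ℝ => y⁻¹) (-(y^2)⁻¹) y := by
      simpa using (hasDerivAt_inv hy0)
    simpa [div_eq_mul_inv] using this.const_mul (t*x)
  have h6 : HasDerivAt (fun y : ℝ => t*(1-x)/(1-y)) ((t*(1-x)) * (-(((1-y)^2)⁻¹) * (-1))) y := by
    have hinv : HasDerivAt (fun u : ℝ => u⁻¹) (-(((1-y)^2)⁻¹)) (1-y) := by
      simpa using (hasDerivAt_inv hy1)
    have := (hinv.comp y hid).const_mul (t*(1-x))
    simpa [div_eq_mul_inv, Function.comp] using this
  have hFull := ((((h3.sub h4).sub (hasDerivAt_const y (Real.log x))).add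
    (hasDerivAt_const y (Real.log (1-x)))).add h5).sub h6
  have heq : (1/y - (1/(1-y)) * (-1) - 0 + 0 + t*x * (-(y^2)⁻¹))
      - ((t*(1-x)) * (-(((1-y)^2)⁻¹) * (-1))) = PhiDD x t y := by
    rw [PhiDD]; field_simp; ring
  rw [heq] at hFull
  exact hFull.congr_of_eventuallyEq (by filter_upwards with z; rw [PhiD]; rfl)


lemma Phi_at_x (hx : x ∈ Ioo (0:ℝ) 1) : Phi x t x = 0 := by
  rw [Phi, D2_self hx]; ring

lemma PhiD_at_x (hx : x ∈ Ioo (0:ℝ) 1) : PhiD x t x = 0 := by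
  have h0 : x ≠ 0 := hx.1.ne'
  have h1 : (1:ℝ) - x ≠ 0 := by have := hx.2; intro h; linarith
  rw [PhiD]; field_simp; ring

lemma psi_at_x : psi x t x = (1-t)*(x*(1-x)) := by rw [psi]; ring

lemma PhiDD_eq (hy : y ∈ Ioo (0:ℝ) 1) : PhiDD x t y = psi x t y / (y^2*(1-y)^2) := by
  have h0 : y ≠ 0 := hy.1.ne'
  have h1 : (1:ℝ) - y ≠ 0 := by have := hy.2; intro h; linarith
  rw [PhiDD, psi]; field_simp; ring

lemma PhiDD_nonneg (hy : y ∈ Ioo (0:ℝ) 1) (h : 0 ≤ psi x t y) : 0 ≤ PhiDD x t y := by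
  rw [PhiDD_eq hy]
  have h0 : 0 < y := hy.1
  have h1 : (0:ℝ) < 1 - y := by have := hy.2; linarith
  positivity

lemma PhiDD_nonpos (hy : y ∈ Ioo (0:ℝ) 1) (h : psi x t y ≤ 0) : PhiDD x t y ≤ 0 := by
  rw [PhiDD_eq hy]
  apply div_nonpos_of_nonpos_of_nonneg h
  have h0 : 0 < y := hy.1
  have h1 : (0:ℝ) < 1 - y := by have := hy.2; linarith
  positivity

lemma PhiDD_neg (hy : y ∈ Ioo (0:ℝ) 1) (h : psi x t y < 0) : PhiDD x t y < 0 := by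
  rw [PhiDD_eq hy]
  apply div_neg_of_neg_of_pos h
  have h0 : 0 < y := hy.1
  have h1 : (0:ℝ) < 1 - y := by have := hy.2; linarith
  positivity

lemma psi_three {u v w : ℝ} (ht : 0 < t) (h1 : u ≤ w) (h2 : w ≤ v)
    (hu : 0 ≤ psi x t u) (hv : 0 ≤ psi x t v) : 0 ≤ psi x t w := by
  rcases eq_or_lt_of_le (h1.trans h2) with h | h
  · rcases le_antisymm h2 (h ▸ h1) with rfl
    exact hv
  · rw [psi] at *
    nlinarith [mul_nonneg (sub_nonneg.2 h1) (sub_nonneg.2 h2), mul_pos ht (sub_pos.2 h),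
      mul_nonneg (mul_nonneg (sub_nonneg.2 h1) (sub_nonneg.2 h2)) (sub_pos.2 h).le]

lemma contOn_Phi {u v : ℝ} (hx : x ∈ Ioo (0:ℝ) 1) (hsub : Icc u v ⊆ Ioo (0:ℝ) 1) :
    ContinuousOn (Phi x t) (Icc u v) :=
  fun z hz => ((hasDerivAt_Phi hx (hsub hz)).continuousAt).continuousWithinAt

lemma contOn_PhiD {u v : ℝ} (hx : x ∈ Ioo (0:ℝ) 1) (hsub : Icc u v ⊆ Ioo (0:ℝ) 1) :
    ContinuousOn (PhiD x t) (Icc u v) :=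
  fun z hz => ((hasDerivAt_PhiD hx (hsub hz)).continuousAt).continuousWithinAt

lemma PhiD_monoOn {u v : ℝ} (hx : x ∈ Ioo (0:ℝ) 1) (hsub : Icc u v ⊆ Ioo (0:ℝ) 1)
    (hpsi : ∀ z ∈ Icc u v, 0 ≤ psi x t z) : MonotoneOn (PhiD x t) (Icc u v) := by
  apply monotoneOn_of_hasDerivWithinAt_nonneg (convex_Icc u v) (contOn_PhiD hx hsub)
    (f' := PhiDD x t)
  · intro z hz
    rw [interior_Icc] at hz
    exact (hasDerivAt_PhiD hx (hsub (Ioo_subset_Icc_self hz))).hasDerivWithinAt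
  · intro z hz
    rw [interior_Icc] at hz
    exact PhiDD_nonneg (hsub (Ioo_subset_Icc_self hz)) (hpsi z (Ioo_subset_Icc_self hz))

lemma PhiD_strictAntiOn {u v : ℝ} (hx : x ∈ Ioo (0:ℝ) 1) (hsub : Icc u v ⊆ Ioo (0:ℝ) 1)
    (hpsi : ∀ z ∈ Ioo u v, psi x t z < 0) : StrictAntiOn (PhiD x t) (Icc u v) := by
  apply strictAntiOn_of_hasDerivWithinAt_neg (convex_Icc u v) (contOn_PhiD hx hsub)
    (f' := PhiDD x t)
  · intro z hz
    rw [interior_Icc] at hz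
    exact (hasDerivAt_PhiD hx (hsub (Ioo_subset_Icc_self hz))).hasDerivWithinAt
  · intro z hz
    rw [interior_Icc] at hz
    exact PhiDD_neg (hsub (Ioo_subset_Icc_self hz)) (hpsi z hz)

lemma Phi_monoOn {u v : ℝ} (hx : x ∈ Ioo (0:ℝ) 1) (hsub : Icc u v ⊆ Ioo (0:ℝ) 1)
    (hd : ∀ z ∈ Ioo u v, 0 ≤ PhiD x t z) : MonotoneOn (Phi x t) (Icc u v) := by
  apply monotoneOn_of_hasDerivWithinAt_nonneg (convex_Icc u v) (contOn_Phi hx hsub)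
    (f' := PhiD x t)
  · intro z hz
    rw [interior_Icc] at hz
    exact (hasDerivAt_Phi hx (hsub (Ioo_subset_Icc_self hz))).hasDerivWithinAt
  · intro z hz
    rw [interior_Icc] at hz
    exact hd z hz

lemma Phi_antiOn {u v : ℝ} (hx : x ∈ Ioo (0:ℝ) 1) (hsub : Icc u v ⊆ Ioo (0:ℝ) 1)
    (hd : ∀ z ∈ Ioo u v, PhiD x t z ≤ 0) : AntitoneOn (Phi x t) (Icc u v) := by
  apply antitoneOn_of_hasDerivWithinAt_nonpos (convex_Icc u v) (contOn_Phi hx hsub)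
    (f' := PhiD x t)
  · intro z hz
    rw [interior_Icc] at hz
    exact (hasDerivAt_Phi hx (hsub (Ioo_subset_Icc_self hz))).hasDerivWithinAt
  · intro z hz
    rw [interior_Icc] at hz
    exact hd z hz

lemma Phi_strictAntiOn {u v : ℝ} (hx : x ∈ Ioo (0:ℝ) 1) (hsub : Icc u v ⊆ Ioo (0:ℝ) 1)
    (hd : ∀ z ∈ Ioo u v, PhiD x t z < 0) : StrictAntiOn (Phi x t) (Icc u v) := by
  apply strictAntiOn_of_hasDerivWithinAt_neg (convex_Icc u v) (contOn_Phi hx hsub)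
    (f' := PhiD x t)
  · intro z hz
    rw [interior_Icc] at hz
    exact (hasDerivAt_Phi hx (hsub (Ioo_subset_Icc_self hz))).hasDerivWithinAt
  · intro z hz
    rw [interior_Icc] at hz
    exact hd z hz

lemma Phi_strictMonoOn {u v : ℝ} (hx : x ∈ Ioo (0:ℝ) 1) (hsub : Icc u v ⊆ Ioo (0:ℝ) 1)
    (hd : ∀ z ∈ Ioo u v, 0 < PhiD x t z) : StrictMonoOn (Phi x t) (Icc u v) := by
  apply strictMonoOn_of_hasDerivWithinAt_pos (convex_Icc u v) (contOn_Phi hx hsub)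
    (f' := PhiD x t)
  · intro z hz
    rw [interior_Icc] at hz
    exact (hasDerivAt_Phi hx (hsub (Ioo_subset_Icc_self hz))).hasDerivWithinAt
  · intro z hz
    rw [interior_Icc] at hz
    exact hd z hz

lemma PhiD_antiOn {u v : ℝ} (hx : x ∈ Ioo (0:ℝ) 1) (hsub : Icc u v ⊆ Ioo (0:ℝ) 1)
    (hpsi : ∀ z ∈ Icc u v, psi x t z ≤ 0) : AntitoneOn (PhiD x t) (Icc u v) := by
  apply antitoneOn_of_hasDerivWithinAt_nonpos (convex_Icc u v) (contOn_PhiD hx hsub)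
    (f' := PhiDD x t)
  · intro z hz
    rw [interior_Icc] at hz
    exact (hasDerivAt_PhiD hx (hsub (Ioo_subset_Icc_self hz))).hasDerivWithinAt
  · intro z hz
    rw [interior_Icc] at hz
    exact PhiDD_nonpos (hsub (Ioo_subset_Icc_self hz)) (hpsi z (Ioo_subset_Icc_self hz))

/-- If `ψ ≥ 0` on `[x,y]` (with `x < y`) then `Φ y ≥ 0`. -/
lemma Phi_nonneg_right (hx : x ∈ Ioo (0:ℝ) 1) (hy : y ∈ Ioo (0:ℝ) 1) (hxy : x < y)
    (hpsi : ∀ z ∈ Icc x y, 0 ≤ psi x t z) : 0 ≤ Phi x t y := by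
  have hsub : Icc x y ⊆ Ioo (0:ℝ) 1 := fun z hz => ⟨lt_of_lt_of_le hx.1 hz.1, lt_of_le_of_lt hz.2 hy.2⟩
  have hmono := PhiD_monoOn hx hsub hpsi
  have hd : ∀ z ∈ Ioo x y, 0 ≤ PhiD x t z := by
    intro z hz
    have := hmono (left_mem_Icc.2 hxy.le) (Ioo_subset_Icc_self hz) hz.1.le
    rwa [PhiD_at_x hx] at this
  have := Phi_monoOn hx hsub hd (left_mem_Icc.2 hxy.le) (right_mem_Icc.2 hxy.le) hxy.le
  rwa [Phi_at_x hx] at this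

/-- If `ψ ≥ 0` on `[y,x]` (with `y < x`) then `Φ y ≥ 0`. -/
lemma Phi_nonneg_left (hx : x ∈ Ioo (0:ℝ) 1) (hy : y ∈ Ioo (0:ℝ) 1) (hxy : y < x)
    (hpsi : ∀ z ∈ Icc y x, 0 ≤ psi x t z) : 0 ≤ Phi x t y := by
  have hsub : Icc y x ⊆ Ioo (0:ℝ) 1 := fun z hz => ⟨lt_of_lt_of_le hy.1 hz.1, lt_of_le_of_lt hz.2 hx.2⟩
  have hmono := PhiD_monoOn hx hsub hpsi
  have hd : ∀ z ∈ Ioo y x, PhiD x t z ≤ 0 := by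
    intro z hz
    have := hmono (Ioo_subset_Icc_self hz) (right_mem_Icc.2 hxy.le) hz.2.le
    rwa [PhiD_at_x hx] at this
  have := Phi_antiOn hx hsub hd (left_mem_Icc.2 hxy.le) (right_mem_Icc.2 hxy.le) hxy.le
  rwa [Phi_at_x hx] at this

/-- If `ψ < 0` on `(x,y)` (with `x < y`) then `Φ y < 0`. -/
lemma Phi_neg_right (hx : x ∈ Ioo (0:ℝ) 1) (hy : y ∈ Ioo (0:ℝ) 1) (hxy : x < y)
    (hpsi : ∀ z ∈ Ioo x y, psi x t z < 0) : Phi x t y < 0 := by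
  have hsub : Icc x y ⊆ Ioo (0:ℝ) 1 := fun z hz => ⟨lt_of_lt_of_le hx.1 hz.1, lt_of_le_of_lt hz.2 hy.2⟩
  have hanti := PhiD_strictAntiOn hx hsub hpsi
  have hd : ∀ z ∈ Ioo x y, PhiD x t z < 0 := by
    intro z hz
    have := hanti (left_mem_Icc.2 hxy.le) (Ioo_subset_Icc_self hz) hz.1
    rwa [PhiD_at_x hx] at this
  have := Phi_strictAntiOn hx hsub hd (left_mem_Icc.2 hxy.le) (right_mem_Icc.2 hxy.le) hxy
  rwa [Phi_at_x hx] at this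

/-- If `ψ < 0` on `(y,x)` (with `y < x`) then `Φ y < 0`. -/
lemma Phi_neg_left (hx : x ∈ Ioo (0:ℝ) 1) (hy : y ∈ Ioo (0:ℝ) 1) (hxy : y < x)
    (hpsi : ∀ z ∈ Ioo y x, psi x t z < 0) : Phi x t y < 0 := by
  have hsub : Icc y x ⊆ Ioo (0:ℝ) 1 := fun z hz => ⟨lt_of_lt_of_le hy.1 hz.1, lt_of_le_of_lt hz.2 hx.2⟩
  have hanti := PhiD_strictAntiOn hx hsub hpsi
  have hd : ∀ z ∈ Ioo y x, 0 < PhiD x t z := by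
    intro z hz
    have := hanti (Ioo_subset_Icc_self hz) (right_mem_Icc.2 hxy.le) hz.2
    rwa [PhiD_at_x hx] at this
  have := Phi_strictMonoOn hx hsub hd (left_mem_Icc.2 hxy.le) (right_mem_Icc.2 hxy.le) hxy
  rwa [Phi_at_x hx] at this

lemma Phi_convexOn {u v : ℝ} (hx : x ∈ Ioo (0:ℝ) 1) (hsub : Icc u v ⊆ Ioo (0:ℝ) 1)
    (hpsi : ∀ z ∈ Icc u v, 0 ≤ psi x t z) : ConvexOn ℝ (Icc u v) (Phi x t) := by
  apply MonotoneOn.convexOn_of_deriv (convex_Icc u v) (contOn_Phi hx hsub)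
  · rw [interior_Icc]
    exact fun z hz =>
      (hasDerivAt_Phi hx (hsub (Ioo_subset_Icc_self hz))).differentiableAt.differentiableWithinAt
  · rw [interior_Icc]
    intro a ha b hb hab
    rw [(hasDerivAt_Phi hx (hsub (Ioo_subset_Icc_self ha))).deriv,
      (hasDerivAt_Phi hx (hsub (Ioo_subset_Icc_self hb))).deriv]
    exact PhiD_monoOn hx hsub hpsi (Ioo_subset_Icc_self ha) (Ioo_subset_Icc_self hb) hab

lemma Phi_concaveOn {u v : ℝ} (hx : x ∈ Ioo (0:ℝ) 1) (hsub : Icc u v ⊆ Ioo (0:ℝ) 1)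
    (hpsi : ∀ z ∈ Icc u v, psi x t z ≤ 0) : ConcaveOn ℝ (Icc u v) (Phi x t) := by
  apply AntitoneOn.concaveOn_of_deriv (convex_Icc u v) (contOn_Phi hx hsub)
  · rw [interior_Icc]
    exact fun z hz =>
      (hasDerivAt_Phi hx (hsub (Ioo_subset_Icc_self hz))).differentiableAt.differentiableWithinAt
  · rw [interior_Icc]
    intro a ha b hb hab
    rw [(hasDerivAt_Phi hx (hsub (Ioo_subset_Icc_self ha))).deriv,
      (hasDerivAt_Phi hx (hsub (Ioo_subset_Icc_self hb))).deriv]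
    exact PhiD_antiOn hx hsub hpsi (Ioo_subset_Icc_self ha) (Ioo_subset_Icc_self hb) hab

lemma concave_anchor {F : ℝ → ℝ} {u v w : ℝ} (hcc : ConcaveOn ℝ (Icc u v) F)
    (huv : u ≤ v) (hw : w ∈ Icc u v) (hu : 0 ≤ F u) (hv : 0 ≤ F v) : 0 ≤ F w := by
  refine le_trans (le_min hu hv) (hcc.ge_on_segment (left_mem_Icc.2 huv) (right_mem_Icc.2 huv) ?_)
  rwa [segment_eq_Icc huv]

lemma convex_push {F : ℝ → ℝ} {r a b : ℝ} (hcv : ConvexOn ℝ (Icc r b) F)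
    (hr : F r < 0) (ha : 0 ≤ F a) (h1 : r < a) (h2 : a < b) : 0 < F b := by
  have hrb : r < b := h1.trans h2
  have hden : (0:ℝ) < b - r := by linarith
  set lam := (b - a) / (b - r) with hlam
  set mu := (a - r) / (b - r) with hmu
  have hlam0 : 0 < lam := by apply div_pos <;> linarith
  have hmu0 : 0 < mu := by apply div_pos <;> linarith
  have hsum : lam + mu = 1 := by
    rw [hlam, hmu, ← add_div, div_eq_one_iff_eq hden.ne']; ring
  have hcomb : lam • r + mu • b = a := by
    rw [smul_eq_mul, smul_eq_mul, hlam, hmu]; field_simp; ring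
  have := hcv.2 (left_mem_Icc.2 hrb.le) (right_mem_Icc.2 hrb.le) hlam0.le hmu0.le hsum
  rw [hcomb] at this
  simp only [smul_eq_mul] at this
  nlinarith

lemma psi_factor (ht : 0 < t) {z₀ : ℝ} (hz : 0 ≤ psi x t z₀) :
    ∃ r s : ℝ, r ≤ s ∧ ∀ y, psi x t y = (1+t) * ((y - r) * (s - y)) := by
  have ht1 : (0:ℝ) < 1 + t := by linarith
  have hΔ : 0 ≤ (1+2*t*x)^2 - 4*(1+t)*(t*x) := by
    have h := hz; rw [psi] at h
    nlinarith [sq_nonneg (2*(1+t)*z₀ - (1+2*t*x))]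
  have hsq : Real.sqrt ((1+2*t*x)^2 - 4*(1+t)*(t*x)) * Real.sqrt ((1+2*t*x)^2 - 4*(1+t)*(t*x))
      = (1+2*t*x)^2 - 4*(1+t)*(t*x) := Real.mul_self_sqrt hΔ
  have h0 : (0:ℝ) < 2*(1+t) := by linarith
  set q := Real.sqrt ((1+2*t*x)^2 - 4*(1+t)*(t*x)) with hqdef
  refine ⟨((1+2*t*x) - q)/(2*(1+t)), ((1+2*t*x) + q)/(2*(1+t)), ?_, ?_⟩
  · rw [div_le_div_iff₀ h0 h0]
    nlinarith [Real.sqrt_nonneg ((1+2*t*x)^2 - 4*(1+t)*(t*x))]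
  · intro y
    rw [psi]
    field_simp
    linear_combination (-1 : ℝ) * hsq

lemma mem_of_psi_nonneg {r s z : ℝ} (ht : 0 < t) (hrs : r ≤ s)
    (hfac : ∀ y, psi x t y = (1+t) * ((y - r) * (s - y)))
    (hz : 0 ≤ psi x t z) : r ≤ z ∧ z ≤ s := by
  have h := hz
  rw [hfac z] at h
  constructor
  · by_contra hc
    push_neg at hc
    have h1 := mul_neg_of_neg_of_pos (show z-r < 0 by linarith) (show 0 < s-z by linarith)
    nlinarith
  · by_contra hc
    push_neg at hc
    have h1 := mul_neg_of_pos_of_neg (show 0 < z-r by linarith) (show s-z < 0 by linarith)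
    nlinarith

lemma psi_neg_of_lt {r s z : ℝ} (ht : 0 < t) (hrs : r ≤ s)
    (hfac : ∀ y, psi x t y = (1+t) * ((y - r) * (s - y)))
    (hz : z < r) : psi x t z < 0 := by
  rw [hfac z]
  have h1 := mul_neg_of_neg_of_pos (show z-r < 0 by linarith) (show 0 < s-z by linarith)
  nlinarith

lemma psi_neg_of_gt {r s z : ℝ} (ht : 0 < t) (hrs : r ≤ s)
    (hfac : ∀ y, psi x t y = (1+t) * ((y - r) * (s - y)))
    (hz : s < z) : psi x t z < 0 := by
  rw [hfac z]
  have h1 := mul_neg_of_pos_of_neg (show 0 < z-r by linarith) (show s-z < 0 by linarith)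
  nlinarith

lemma psi_nonneg_of_mem {r s z : ℝ} (ht : 0 < t)
    (hfac : ∀ y, psi x t y = (1+t) * ((y - r) * (s - y)))
    (h1 : r ≤ z) (h2 : z ≤ s) : 0 ≤ psi x t z := by
  rw [hfac z]
  have h3 := mul_nonneg (show (0:ℝ) ≤ z-r by linarith) (show (0:ℝ) ≤ s-z by linarith)
  nlinarith

lemma psi_nonpos_of_ge {r s z : ℝ} (ht : 0 < t) (hrs : r ≤ s)
    (hfac : ∀ y, psi x t y = (1+t) * ((y - r) * (s - y)))
    (h1 : s ≤ z) : psi x t z ≤ 0 := by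
  rw [hfac z]
  have h3 := mul_nonpos_of_nonneg_of_nonpos (show (0:ℝ) ≤ z-r by linarith)
    (show s-z ≤ 0 by linarith)
  nlinarith

lemma psi_nonpos_of_le {r s z : ℝ} (ht : 0 < t) (hrs : r ≤ s)
    (hfac : ∀ y, psi x t y = (1+t) * ((y - r) * (s - y)))
    (h1 : z ≤ r) : psi x t z ≤ 0 := by
  rw [hfac z]
  have h3 := mul_nonpos_of_nonpos_of_nonneg (show z-r ≤ 0 by linarith)
    (show (0:ℝ) ≤ s-z by linarith)
  nlinarith

lemma Phi_reflect (x t y : ℝ) : Phi (1-x) t (1-y) = Phi x t y := by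
  rw [Phi, Phi, D2_reflect y x, D2_reflect x y]

lemma psi_reflect (x t y : ℝ) : psi (1-x) t (1-y) = psi x t y := by
  rw [psi, psi]; ring

lemma mem_reflect (h : y ∈ Ioo (0:ℝ) 1) : 1 - y ∈ Ioo (0:ℝ) 1 :=
  ⟨by linarith [h.2], by linarith [h.1]⟩

/-- For `t > 1` there are no points with `Φ ≥ 0` on both sides of `x`. -/
lemma phi_no_straddle (hx : x ∈ Ioo (0:ℝ) 1) (ht : 1 < t) {a c : ℝ}
    (ha : a ∈ Ioo (0:ℝ) 1) (hc : c ∈ Ioo (0:ℝ) 1) (hax : a < x) (hxc : x < c)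
    (hPa : 0 ≤ Phi x t a) (hPc : 0 ≤ Phi x t c) : False := by
  have ht0 : 0 < t := by linarith
  have hZa : ∃ z ∈ Icc a x, 0 ≤ psi x t z := by
    by_contra h
    push_neg at h
    have := Phi_neg_left hx ha hax (fun z hz => h z (Ioo_subset_Icc_self hz))
    linarith
  have hZc : ∃ z ∈ Icc x c, 0 ≤ psi x t z := by
    by_contra h
    push_neg at h
    have := Phi_neg_right hx hc hxc (fun z hz => h z (Ioo_subset_Icc_self hz))
    linarith
  obtain ⟨za, hzam, hza⟩ := hZa
  obtain ⟨zc, hzcm, hzc⟩ := hZc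
  have h3 := psi_three ht0 hzam.2 hzcm.1 hza hzc
  rw [psi_at_x] at h3
  nlinarith [mul_pos hx.1 (show (0:ℝ) < 1 - x by linarith [hx.2])]

/-- Main case for `t > 1`, `x < a < b < c`. -/
lemma gt_case (hx : x ∈ Ioo (0:ℝ) 1) (ht : 1 < t) {a b c : ℝ}
    (ha : a ∈ Ioo (0:ℝ) 1) (hb : b ∈ Ioo (0:ℝ) 1) (hc : c ∈ Ioo (0:ℝ) 1)
    (hxa : x < a) (hab : a < b) (hbc : b < c)
    (hPa : 0 ≤ Phi x t a) (hPc : 0 ≤ Phi x t c) : 0 ≤ Phi x t b := by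
  have ht0 : 0 < t := by linarith
  have hZ : ∃ z ∈ Icc x a, 0 ≤ psi x t z := by
    by_contra h
    push_neg at h
    have := Phi_neg_right hx ha hxa (fun z hz => h z (Ioo_subset_Icc_self hz))
    linarith
  obtain ⟨z₀, hz₀m, hz₀⟩ := hZ
  obtain ⟨r, s, hrs, hfac⟩ := psi_factor ht0 hz₀
  obtain ⟨hrz, hzs⟩ := mem_of_psi_nonneg ht0 hrs hfac hz₀
  have hpsix : psi x t x < 0 := by
    rw [psi_at_x]
    nlinarith [mul_pos hx.1 (show (0:ℝ) < 1 - x by linarith [hx.2])]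
  have hxr : x < r := by
    by_contra hcon
    push_neg at hcon
    have := psi_nonneg_of_mem ht0 hfac hcon (le_trans hz₀m.1 hzs)
    linarith
  have hra : r ≤ a := le_trans hrz hz₀m.2
  have hr1 : r ∈ Ioo (0:ℝ) 1 := ⟨lt_trans hx.1 hxr, lt_of_le_of_lt hra ha.2⟩
  have hPr : Phi x t r < 0 :=
    Phi_neg_right hx hr1 hxr (fun z hz => psi_neg_of_lt ht0 hrs hfac hz.2)
  have hra' : r < a := lt_of_le_of_ne hra (fun h => by rw [h] at hPr; linarith)
  rcases le_or_gt b s with hbs | hsb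
  · have hsub : Icc r b ⊆ Ioo (0:ℝ) 1 :=
      fun z hz => ⟨lt_of_lt_of_le hr1.1 hz.1, lt_of_le_of_lt hz.2 hb.2⟩
    have hcv := Phi_convexOn hx hsub
      (fun z hz => psi_nonneg_of_mem ht0 hfac hz.1 (le_trans hz.2 hbs))
    exact (convex_push hcv hPr hPa hra' hab).le
  · have hs1 : s ∈ Ioo (0:ℝ) 1 := ⟨lt_of_lt_of_le hr1.1 hrs, lt_trans hsb hb.2⟩
    have hw : 0 ≤ Phi x t (max a s) := by
      rcases le_total s a with h | h
      · rw [max_eq_left h]; exact hPa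
      · rcases eq_or_lt_of_le h with heq | hlt
        · rw [max_eq_right h, ← heq]; exact hPa
        · rw [max_eq_right h]
          have hsub : Icc r s ⊆ Ioo (0:ℝ) 1 :=
            fun z hz => ⟨lt_of_lt_of_le hr1.1 hz.1, lt_of_le_of_lt hz.2 hs1.2⟩
          have hcv := Phi_convexOn hx hsub
            (fun z hz => psi_nonneg_of_mem ht0 hfac hz.1 hz.2)
          exact (convex_push hcv hPr hPa hra' hlt).le
    have hwb : max a s ≤ b := max_le hab.le hsb.le
    have hw1 : max a s ∈ Ioo (0:ℝ) 1 :=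
      ⟨lt_of_lt_of_le ha.1 (le_max_left a s), lt_of_le_of_lt hwb hb.2⟩
    have hsub : Icc (max a s) c ⊆ Ioo (0:ℝ) 1 :=
      fun z hz => ⟨lt_of_lt_of_le hw1.1 hz.1, lt_of_le_of_lt hz.2 hc.2⟩
    have hcc := Phi_concaveOn hx hsub
      (fun z hz => psi_nonpos_of_ge ht0 hrs hfac (le_trans (le_max_right a s) hz.1))
    exact concave_anchor hcc (le_trans hwb hbc.le) ⟨hwb, hbc.le⟩ hw hPc

/-- Main case for `t ≤ 1`, `x < b`, `ψ b < 0`. -/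
lemma le_one_case_right (hx : x ∈ Ioo (0:ℝ) 1) (ht0 : 0 < t) (ht1 : t ≤ 1) {a b c : ℝ}
    (ha : a ∈ Ioo (0:ℝ) 1) (hb : b ∈ Ioo (0:ℝ) 1) (hc : c ∈ Ioo (0:ℝ) 1)
    (hab : a < b) (hbc : b < c) (hxb : x < b) (hpsib : psi x t b < 0)
    (hPa : 0 ≤ Phi x t a) (hPc : 0 ≤ Phi x t c) : 0 ≤ Phi x t b := by
  have hpsix : 0 ≤ psi x t x := by
    rw [psi_at_x]
    nlinarith [mul_pos hx.1 (show (0:ℝ) < 1 - x by linarith [hx.2])]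
  obtain ⟨r, s, hrs, hfac⟩ := psi_factor ht0 hpsix
  obtain ⟨hrx, hxs⟩ := mem_of_psi_nonneg ht0 hrs hfac hpsix
  have hsb : s < b := by
    by_contra h
    push_neg at h
    have := psi_nonneg_of_mem ht0 hfac (le_trans hrx hxb.le) h
    linarith
  have hs1 : s ∈ Ioo (0:ℝ) 1 := ⟨lt_of_lt_of_le hx.1 hxs, lt_trans hsb hb.2⟩
  have hPs : 0 ≤ Phi x t s := by
    rcases eq_or_lt_of_le hxs with heq | hlt
    · rw [← heq, Phi_at_x hx]
    · exact Phi_nonneg_right hx hs1 hlt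
        (fun z hz => psi_nonneg_of_mem ht0 hfac (le_trans hrx hz.1) hz.2)
  have hw : 0 ≤ Phi x t (max a s) := by
    rcases le_total s a with h | h
    · rw [max_eq_left h]; exact hPa
    · rw [max_eq_right h]; exact hPs
  have hwb : max a s ≤ b := max_le hab.le hsb.le
  have hw1 : max a s ∈ Ioo (0:ℝ) 1 :=
    ⟨lt_of_lt_of_le ha.1 (le_max_left a s), lt_of_le_of_lt hwb hb.2⟩
  have hsub : Icc (max a s) c ⊆ Ioo (0:ℝ) 1 :=
    fun z hz => ⟨lt_of_lt_of_le hw1.1 hz.1, lt_of_le_of_lt hz.2 hc.2⟩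
  have hcc := Phi_concaveOn hx hsub
    (fun z hz => psi_nonpos_of_ge ht0 hrs hfac (le_trans (le_max_right a s) hz.1))
  exact concave_anchor hcc (le_trans hwb hbc.le) ⟨hwb, hbc.le⟩ hw hPc

/-- Quasi-concavity at the level of `Φ`. -/
lemma phiQC (hx : x ∈ Ioo (0:ℝ) 1) (ht0 : 0 < t) {a b c : ℝ}
    (ha : a ∈ Ioo (0:ℝ) 1) (hb : b ∈ Ioo (0:ℝ) 1) (hc : c ∈ Ioo (0:ℝ) 1)
    (hab : a < b) (hbc : b < c)
    (hPa : 0 ≤ Phi x t a) (hPc : 0 ≤ Phi x t c)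
    (hside : 1 < t → a ≠ x ∧ c ≠ x) : 0 ≤ Phi x t b := by
  rcases le_or_gt t 1 with ht1 | ht1
  · by_cases hbx : b = x
    · rw [hbx, Phi_at_x hx]
    · have hpsix : 0 ≤ psi x t x := by
        rw [psi_at_x]
        nlinarith [mul_pos hx.1 (show (0:ℝ) < 1 - x by linarith [hx.2])]
      by_cases hpb : 0 ≤ psi x t b
      · rcases lt_or_gt_of_ne hbx with h | h
        · exact Phi_nonneg_left hx hb h (fun z hz => psi_three ht0 hz.1 hz.2 hpb hpsix)
        · exact Phi_nonneg_right hx hb h (fun z hz => psi_three ht0 hz.1 hz.2 hpsix hpb)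
      · push_neg at hpb
        rcases lt_or_gt_of_ne hbx with hblt | hbgt
        · have hr := le_one_case_right (x := 1-x) (t := t) (mem_reflect hx) ht0 ht1
            (a := 1-c) (b := 1-b) (c := 1-a) (mem_reflect hc) (mem_reflect hb) (mem_reflect ha)
            (by linarith) (by linarith) (by linarith)
            (by rw [psi_reflect]; exact hpb)
            (by rw [Phi_reflect]; exact hPc)
            (by rw [Phi_reflect]; exact hPa)
          rwa [Phi_reflect] at hr
        · exact le_one_case_right hx ht0 ht1 ha hb hc hab hbc hbgt hpb hPa hPc
  · obtain ⟨hax, hcx⟩ := hside ht1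
    rcases lt_or_gt_of_ne hax with haxlt | haxgt
    · have hcxlt : c < x := by
        rcases lt_or_gt_of_ne hcx with h | h
        · exact h
        · exact absurd (phi_no_straddle hx ht1 ha hc haxlt h hPa hPc) not_false
      have hr := gt_case (x := 1-x) (t := t) (mem_reflect hx) ht1
        (a := 1-c) (b := 1-b) (c := 1-a) (mem_reflect hc) (mem_reflect hb) (mem_reflect ha)
        (by linarith) (by linarith) (by linarith)
        (by rw [Phi_reflect]; exact hPc)
        (by rw [Phi_reflect]; exact hPa)
      rwa [Phi_reflect] at hr
    · exact gt_case hx ht1 ha hb hc haxgt hab hbc hPa hPc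

lemma fext_eq (hy : y ∈ Ioo (0:ℝ) 1) (hne : y ≠ x) : fext x y = D2 y x / D2 x y := by
  have h : ¬(y = 0 ∨ y = 1) := by
    rintro (rfl | rfl)
    · exact lt_irrefl 0 hy.1
    · exact lt_irrefl (1:ℝ) hy.2
  rw [fext, if_neg h, if_neg hne]

lemma fext_at_x (hx : x ∈ Ioo (0:ℝ) 1) : fext x x = 1 := by
  have h : ¬(x = 0 ∨ x = 1) := by
    rintro (rfl | rfl)
    · exact lt_irrefl 0 hx.1
    · exact lt_irrefl (1:ℝ) hx.2
  rw [fext, if_neg h, if_pos rfl]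

lemma fext_nonneg (hx : x ∈ Ioo (0:ℝ) 1) {y : ℝ} (hy : y ∈ Icc (0:ℝ) 1) : 0 ≤ fext x y := by
  rcases eq_or_lt_of_le hy.1 with h0 | h0
  · rw [fext, if_pos (Or.inl h0.symm)]
  rcases eq_or_lt_of_le hy.2 with h1 | h1
  · rw [fext, if_pos (Or.inr h1)]
  by_cases hne : y = x
  · rw [hne, fext_at_x hx]; norm_num
  · rw [fext_eq ⟨h0, h1⟩ hne]
    exact le_of_lt (div_pos (D2_pos ⟨h0, h1⟩ hx hne) (D2_pos hx ⟨h0, h1⟩ (Ne.symm hne)))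

lemma Phi_nonneg_of_le_fext (hx : x ∈ Ioo (0:ℝ) 1) (hy : y ∈ Ioo (0:ℝ) 1) (hne : y ≠ x)
    (h : t ≤ fext x y) : 0 ≤ Phi x t y := by
  rw [fext_eq hy hne] at h
  have hH : 0 < D2 x y := D2_pos hx hy (Ne.symm hne)
  have := (le_div_iff₀ hH).1 h
  rw [Phi]; linarith

lemma le_fext_of_Phi_nonneg (hx : x ∈ Ioo (0:ℝ) 1) (hy : y ∈ Ioo (0:ℝ) 1) (hne : y ≠ x)
    (h : 0 ≤ Phi x t y) : t ≤ fext x y := by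
  rw [fext_eq hy hne]
  have hH : 0 < D2 x y := D2_pos hx hy (Ne.symm hne)
  rw [le_div_iff₀ hH]
  rw [Phi] at h; linarith

/-- Quasiconcavity of `fext x` on `[0,1]`. -/
lemma fextQC (hx : x ∈ Ioo (0:ℝ) 1) {a b c : ℝ}
    (ha : a ∈ Icc (0:ℝ) 1) (hb : b ∈ Icc (0:ℝ) 1) (hc : c ∈ Icc (0:ℝ) 1)
    (hab : a ≤ b) (hbc : b ≤ c) : min (fext x a) (fext x c) ≤ fext x b := by
  rcases eq_or_lt_of_le hab with rfl | hab'
  · exact min_le_left _ _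
  rcases eq_or_lt_of_le hbc with rfl | hbc'
  · exact min_le_right _ _
  set t := min (fext x a) (fext x c) with htdef
  rcases le_or_gt t 0 with h | ht0
  · exact le_trans h (fext_nonneg hx hb)
  have hta : t ≤ fext x a := min_le_left _ _
  have htc : t ≤ fext x c := min_le_right _ _
  have ha' : a ∈ Ioo (0:ℝ) 1 := by
    refine ⟨?_, lt_of_lt_of_le (lt_of_lt_of_le hab' hbc'.le) hc.2⟩
    rcases eq_or_lt_of_le ha.1 with h0 | h0
    · exfalso
      have : fext x a = 0 := by rw [← h0, fext, if_pos (Or.inl rfl)]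
      rw [this] at hta; linarith
    · exact h0
  have hc' : c ∈ Ioo (0:ℝ) 1 := by
    refine ⟨lt_of_le_of_lt ha.1 (lt_trans hab' hbc'), ?_⟩
    rcases eq_or_lt_of_le hc.2 with h1 | h1
    · exfalso
      have : fext x c = 0 := by rw [h1, fext, if_pos (Or.inr rfl)]
      rw [this] at htc; linarith
    · exact h1
  have hb' : b ∈ Ioo (0:ℝ) 1 := ⟨lt_trans ha'.1 hab', lt_trans hbc' hc'.2⟩
  have hPa : 0 ≤ Phi x t a := by
    by_cases h : a = x
    · rw [h, Phi_at_x hx]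
    · exact Phi_nonneg_of_le_fext hx ha' h hta
  have hPc : 0 ≤ Phi x t c := by
    by_cases h : c = x
    · rw [h, Phi_at_x hx]
    · exact Phi_nonneg_of_le_fext hx hc' h htc
  have hside : 1 < t → a ≠ x ∧ c ≠ x := by
    intro h1t
    constructor
    · intro h; rw [h, fext_at_x hx] at hta; linarith
    · intro h; rw [h, fext_at_x hx] at htc; linarith
  by_cases hbx : b = x
  · rw [hbx, fext_at_x hx]
    by_contra hgt
    push_neg at hgt
    obtain ⟨hax, hcx⟩ := hside hgt
    exact phi_no_straddle hx hgt ha' hc' (hbx ▸ hab') (hbx ▸ hbc') hPa hPc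
  · exact le_fext_of_Phi_nonneg hx hb' hbx
      (phiQC hx ht0 ha' hb' hc' hab' hbc' hPa hPc hside)

lemma fext_reflect (x y : ℝ) : fext (1-x) (1-y) = fext x y := by
  by_cases h0 : y = 0
  · subst h0; norm_num [fext]
  by_cases h1 : y = 1
  · subst h1; norm_num [fext]
  have c1 : ¬(1 - y = 0 ∨ 1 - y = 1) := by
    rintro (h | h)
    · exact h1 (by linarith)
    · exact h0 (by linarith)
  have c2 : ¬(y = 0 ∨ y = 1) := by tauto
  rw [fext, fext, if_neg c1, if_neg c2]
  by_cases hyx : y = x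
  · subst hyx; simp
  · rw [if_neg (show ¬(1-y = 1-x) by intro h; exact hyx (by linarith)), if_neg hyx,
      D2_reflect y x, D2_reflect x y]

/-- Near `1`, `fext x < 1`. -/
lemma small_right (hx : x ∈ Ioo (0:ℝ) 1) :
    ∃ y₀, x ≤ y₀ ∧ y₀ < 1 ∧ ∀ y, y₀ < y → y < 1 → fext x y < 1 := by
  obtain ⟨hx0, hx1⟩ := hx
  have h1x : (0:ℝ) < 1 - x := by linarith
  have hlx : Real.log x < 0 := Real.log_neg hx0 hx1
  have hl1x : Real.log (1-x) < 0 := Real.log_neg h1x (by linarith)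
  set C := -Real.log x - Real.log (1-x) with hCdef
  have hC : 0 < C := by rw [hCdef]; linarith
  set E := Real.exp (-(2*C+1)/(1-x)) with hEdef
  have hE : 0 < E := Real.exp_pos _
  refine ⟨max x (1-E), le_max_left _ _, max_lt hx1 (by linarith), ?_⟩
  intro y hy0 hy1
  have hxy : x < y := lt_of_le_of_lt (le_max_left x (1-E)) hy0
  have hy : y ∈ Ioo (0:ℝ) 1 := ⟨lt_trans hx0 hxy, hy1⟩
  have h1y : (0:ℝ) < 1 - y := by linarith
  have h1yE : 1 - y < E := by
    have := lt_of_le_of_lt (le_max_right x (1-E)) hy0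
    linarith
  have hly : Real.log y < 0 := Real.log_neg hy.1 hy.2
  have hl1y : Real.log (1-y) < -(2*C+1)/(1-x) := by
    have := Real.log_lt_log h1y h1yE
    rwa [hEdef, Real.log_exp] at this
  have hG : D2 y x ≤ C := by
    rw [D2_expand hy ⟨hx0, hx1⟩]
    have t1 : y * Real.log y ≤ 0 := mul_nonpos_of_nonneg_of_nonpos hy.1.le hly.le
    have t2 : Real.log x ≤ y * Real.log x := by nlinarith
    have hl1y' : Real.log (1-y) < 0 := Real.log_neg h1y (by linarith [lt_of_le_of_lt (le_max_left x (1-E)) hy0, hx0])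
    have t3 : (1-y) * Real.log (1-y) ≤ 0 := mul_nonpos_of_nonneg_of_nonpos h1y.le hl1y'.le
    have t4 : Real.log (1-x) ≤ (1-y) * Real.log (1-x) := by nlinarith
    rw [hCdef]; linarith
  have hH : C + 1 ≤ D2 x y := by
    rw [D2_expand ⟨hx0, hx1⟩ hy]
    have u1 : Real.log x ≤ x * Real.log x := by nlinarith
    have u2 : 0 ≤ -(x * Real.log y) := by nlinarith
    have u3 : Real.log (1-x) ≤ (1-x) * Real.log (1-x) := by nlinarith
    have u4 : (1-x) * Real.log (1-y) < -(2*C+1) := by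
      have h := (mul_lt_mul_iff_right₀ h1x).2 hl1y
      rwa [mul_div_cancel₀ _ h1x.ne'] at h
    rw [hCdef]; linarith [hlx, hl1x]
  have hHpos : 0 < D2 x y := lt_of_lt_of_le (by linarith) hH
  rw [fext_eq hy (ne_of_gt hxy)]
  rw [div_lt_one hHpos]
  linarith

/-- Some point strictly left of `x` has value `< 1`. -/
lemma small_left (hx : x ∈ Ioo (0:ℝ) 1) :
    ∃ y₁, 0 < y₁ ∧ y₁ < x ∧ fext x y₁ < 1 := by
  obtain ⟨y₀, h1, h2, h3⟩ := small_right (mem_reflect hx)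
  refine ⟨1 - (y₀+1)/2, by linarith, by linarith [hx.1, hx.2], ?_⟩
  have := h3 ((y₀+1)/2) (by linarith) (by linarith)
  have hr : fext x (1 - (y₀+1)/2) = fext (1-x) ((y₀+1)/2) := by
    have := fext_reflect x (1 - (y₀+1)/2)
    rw [show (1 : ℝ) - (1 - (y₀+1)/2) = (y₀+1)/2 by ring] at this
    exact this.symm
  rw [hr]
  exact this

end Stmt6Aux


/-- for each `x ∈ (0,1)` the function `f_x` is unimodal
(hence quasi-concave): increasing on `[0,m)` and decreasing on `(m,1]` for some `m`. -/
theorem stmt6 (x : ℝ) (hx : x ∈ Set.Ioo (0 : ℝ) 1) :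
    ∃ m ∈ Set.Ioo (0 : ℝ) 1,
      MonotoneOn (fext x) (Set.Ico 0 m) ∧ AntitoneOn (fext x) (Set.Ioc m 1) := by
  open Stmt6Aux in
  classical
  set f := fext x with hf
  set A : Set ℝ := {y | y ∈ Icc (0:ℝ) 1 ∧ ∀ z ∈ Icc (0:ℝ) 1, z < y → f z ≤ f y} with hA
  have h0A : (0:ℝ) ∈ A := ⟨⟨le_refl 0, zero_le_one⟩, fun z hz hlt => absurd hlt (not_lt.2 hz.1)⟩
  have hbdd : BddAbove A := ⟨1, fun y hy => hy.1.2⟩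
  have hne : A.Nonempty := ⟨0, h0A⟩
  set m := sSup A with hm
  have hm0 : 0 ≤ m := le_csSup hbdd h0A
  have hm1 : m ≤ 1 := csSup_le hne (fun y hy => hy.1.2)
  have QC : ∀ {a b c : ℝ}, a ∈ Icc (0:ℝ) 1 → b ∈ Icc (0:ℝ) 1 → c ∈ Icc (0:ℝ) 1 →
      a ≤ b → b ≤ c → min (f a) (f c) ≤ f b :=
    fun ha hb hc hab hbc => Stmt6Aux.fextQC hx ha hb hc hab hbc
  have hdown : ∀ y ∈ A, ∀ w, w ∈ Icc (0:ℝ) 1 → w < y → w ∈ A := by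
    intro y hy w hw hwy
    refine ⟨hw, fun z hz hzw => ?_⟩
    have h1 : f z ≤ f y := hy.2 z hz (lt_trans hzw hwy)
    have h2 := QC hz hw hy.1 hzw.le hwy.le
    rwa [min_eq_left h1] at h2
  have hstep : ∀ u v, u ∈ Icc (0:ℝ) 1 → v ∈ Icc (0:ℝ) 1 → u ∉ A → u < v → f v ≤ f u := by
    intro u v hu hv hunotA huv
    have : ¬ ∀ z ∈ Icc (0:ℝ) 1, z < u → f z ≤ f u := fun h => hunotA ⟨hu, h⟩
    push_neg at this
    obtain ⟨z, hz, hzu, hzf⟩ := this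
    have h2 := QC hz hu hv hzu.le huv.le
    rcases min_cases (f z) (f v) with ⟨heq, _⟩ | ⟨heq, _⟩
    · rw [heq] at h2; linarith
    · rwa [heq] at h2
  have hmono : MonotoneOn f (Ico 0 m) := by
    intro u hu v hv huv
    rcases eq_or_lt_of_le huv with rfl | huv'
    · exact le_refl _
    obtain ⟨a, haA, hva⟩ := exists_lt_of_lt_csSup hne hv.2
    have hvI : v ∈ Icc (0:ℝ) 1 := ⟨hv.1, le_trans hva.le haA.1.2⟩
    have hvA : v ∈ A := hdown a haA v hvI hva
    exact hvA.2 u ⟨hu.1, le_trans huv hvI.2⟩ huv'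
  have hanti : AntitoneOn f (Ioc m 1) := by
    intro u hu v hv huv
    rcases eq_or_lt_of_le huv with rfl | huv'
    · exact le_refl _
    have huI : u ∈ Icc (0:ℝ) 1 := ⟨le_trans hm0 hu.1.le, hu.2⟩
    have hunotA : u ∉ A := fun h => absurd (le_csSup hbdd h) (not_le.2 hu.1)
    exact hstep u v huI ⟨le_trans huI.1 huv, hv.2⟩ hunotA huv'
  have hfx1 : f x = 1 := Stmt6Aux.fext_at_x hx
  have hmlt1 : m < 1 := by
    obtain ⟨y₀, hy₀x, hy₀1, hy₀⟩ := Stmt6Aux.small_right hx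
    have : m ≤ y₀ := by
      apply csSup_le hne
      intro y hy
      by_contra hgt
      push_neg at hgt
      have hxy : x < y := lt_of_le_of_lt hy₀x hgt
      have hfy : f y < 1 := by
        rcases eq_or_lt_of_le hy.1.2 with h1 | h1
        · rw [hf, h1, fext, if_pos (Or.inr rfl)]; norm_num
        · exact hy₀ y hgt h1
      have := hy.2 x ⟨hx.1.le, hx.2.le⟩ hxy
      rw [hfx1] at this
      linarith
    linarith
  have hm0' : 0 < m := by
    by_contra h
    push_neg at h
    obtain ⟨y₁, hy₁0, hy₁x, hy₁⟩ := Stmt6Aux.small_left hx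
    have hy₁I : y₁ ∈ Icc (0:ℝ) 1 := ⟨hy₁0.le, le_trans hy₁x.le hx.2.le⟩
    have hy₁notA : y₁ ∉ A := fun hmem =>
      absurd (le_csSup hbdd hmem) (not_le.2 (lt_of_le_of_lt h hy₁0))
    have := hstep y₁ x hy₁I ⟨hx.1.le, hx.2.le⟩ hy₁notA hy₁x
    rw [hfx1] at this
    linarith
  exact ⟨m, ⟨hm0', hmlt1⟩, hmono, hanti⟩
end

section
/- For p ∈ [0, 1/2], the infimum over ε ∈ (0, 1−p] of D_2(p+ε‖p)/ε² equals φ(p) = (1/(1−2p)) log((1−p)/p) (with φ(1/2) = 2). -/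
open Matrix MeasureTheory Filter
open scoped BigOperators ComplexOrder

/-- `φ(p) = log((1-p)/p)/(1-2p)`, extended by `φ(1/2) = 2`. -/
noncomputable def phi (p : ℝ) : ℝ :=
  if p = 1 / 2 then 2 else (1 / (1 - 2 * p)) * Real.log ((1 - p) / p)

section AuxStmt10
open Set


private noncomputable def Gf (p t : ℝ) : ℝ :=
  (p+t)*Real.log (p+t) - (p+t)*Real.log p + (1-p-t)*Real.log (1-p-t) - (1-p-t)*Real.log (1-p)

private noncomputable def Gd (p t : ℝ) : ℝ :=
  Real.log (p+t) - Real.log (1-p-t) - Real.log p + Real.log (1-p)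

private lemma Gf_cont (p : ℝ) : Continuous (Gf p) := by
  unfold Gf
  have h1 : Continuous fun t : ℝ => (p+t) * Real.log (p+t) :=
    Real.continuous_mul_log.comp (continuous_const.add continuous_id)
  have h2 : Continuous fun t : ℝ => (1-p-t) * Real.log (1-p-t) :=
    Real.continuous_mul_log.comp ((continuous_const.sub continuous_id))
  exact ((h1.sub ((continuous_const.add continuous_id).mul continuous_const)).add h2).sub
    ((continuous_const.sub continuous_id).mul continuous_const)

private lemma hasDerivAt_Gf (p t : ℝ) (h1 : p + t ≠ 0) (h2 : 1 - p - t ≠ 0) :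
    HasDerivAt (Gf p) (Gd p t) t := by
  have ha : HasDerivAt (fun s : ℝ => p + s) 1 t := (hasDerivAt_id t).const_add p
  have hb : HasDerivAt (fun s : ℝ => 1 - p - s) (-1) t := by
    simpa using (hasDerivAt_id t).const_sub (1 - p)
  have hA : HasDerivAt (fun s : ℝ => (p+s) * Real.log (p+s)) ((Real.log (p+t) + 1) * 1) t :=
    (Real.hasDerivAt_mul_log h1).comp t ha
  have hB : HasDerivAt (fun s : ℝ => (1-p-s) * Real.log (1-p-s)) ((Real.log (1-p-t) + 1) * (-1)) t :=
    (Real.hasDerivAt_mul_log h2).comp t hb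
  have hC : HasDerivAt (fun s : ℝ => (p+s) * Real.log p) (1 * Real.log p) t := ha.mul_const _
  have hD : HasDerivAt (fun s : ℝ => (1-p-s) * Real.log (1-p)) ((-1) * Real.log (1-p)) t :=
    hb.mul_const _
  have := ((hA.sub hC).add hB).sub hD
  refine this.congr_deriv ?_
  unfold Gd; ring

private lemma hasDerivAt_Gd (p t : ℝ) (h1 : p + t ≠ 0) (h2 : 1 - p - t ≠ 0) :
    HasDerivAt (Gd p) ((p+t)⁻¹ + (1-p-t)⁻¹) t := by
  have ha : HasDerivAt (fun s : ℝ => p + s) 1 t := (hasDerivAt_id t).const_add p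
  have hb : HasDerivAt (fun s : ℝ => 1 - p - s) (-1) t := by
    simpa using (hasDerivAt_id t).const_sub (1 - p)
  have hA : HasDerivAt (fun s : ℝ => Real.log (p+s)) ((p+t)⁻¹ * 1) t :=
    (Real.hasDerivAt_log h1).comp t ha
  have hB : HasDerivAt (fun s : ℝ => Real.log (1-p-s)) ((1-p-t)⁻¹ * (-1)) t :=
    (Real.hasDerivAt_log h2).comp t hb
  have := ((hA.sub hB).sub_const (Real.log p)).add_const (Real.log (1-p))
  refine this.congr_deriv ?_
  ring

private lemma monoOn_aux {f f' : ℝ → ℝ} {a b : ℝ}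
    (hd : ∀ t ∈ Icc a b, HasDerivAt f (f' t) t)
    (h0 : ∀ t ∈ Ioo a b, 0 ≤ f' t) : MonotoneOn f (Icc a b) := by
  apply monotoneOn_of_deriv_nonneg (convex_Icc a b)
  · exact fun x hx => (hd x hx).continuousAt.continuousWithinAt
  · rw [interior_Icc]; intro x hx
    exact ((hd x (Ioo_subset_Icc_self hx)).differentiableAt).differentiableWithinAt
  · rw [interior_Icc]; intro x hx
    rw [(hd x (Ioo_subset_Icc_self hx)).deriv]; exact h0 x hx

private lemma antiOn_aux {f f' : ℝ → ℝ} {a b : ℝ}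
    (hd : ∀ t ∈ Icc a b, HasDerivAt f (f' t) t)
    (h0 : ∀ t ∈ Ioo a b, f' t ≤ 0) : AntitoneOn f (Icc a b) := by
  apply antitoneOn_of_deriv_nonpos (convex_Icc a b)
  · exact fun x hx => (hd x hx).continuousAt.continuousWithinAt
  · rw [interior_Icc]; intro x hx
    exact ((hd x (Ioo_subset_Icc_self hx)).differentiableAt).differentiableWithinAt
  · rw [interior_Icc]; intro x hx
    rw [(hd x (Ioo_subset_Icc_self hx)).deriv]; exact h0 x hx

private lemma gsum {a : ℝ} (h1 : 0 < a) (h2 : a < 1) : a⁻¹ + (1-a)⁻¹ = (a*(1-a))⁻¹ := by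
  have h3 : 0 < 1 - a := by linarith
  field_simp; ring

-- log u ≤ (u - u⁻¹)/2 for u ≥ 1
private lemma log_le_half {u : ℝ} (hu : 1 ≤ u) : Real.log u ≤ (u - u⁻¹) / 2 := by
  have h := monoOn_aux (f := fun x => (x - x⁻¹)/2 - Real.log x)
    (f' := fun x => (1 + x⁻¹^2)/2 - x⁻¹) (a := 1) (b := u) ?_ ?_
  · have := h (left_mem_Icc.mpr hu) (right_mem_Icc.mpr hu) hu
    simpa using this
  · intro t ht
    have ht0 : (0:ℝ) < t := lt_of_lt_of_le one_pos ht.1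
    have h1 : HasDerivAt (fun x : ℝ => (x - x⁻¹)/2) ((1 - (-(t^2)⁻¹))/2) t :=
      (((hasDerivAt_id t).sub (hasDerivAt_inv ht0.ne'))).div_const 2
    have h2 : HasDerivAt Real.log t⁻¹ t := Real.hasDerivAt_log ht0.ne'
    have := h1.sub h2
    refine this.congr_deriv ?_
    field_simp; ring
  · intro t ht
    have ht0 : (0:ℝ) < t := lt_trans one_pos ht.1
    have h1 : 1 ≤ t := le_of_lt ht.1
    have : t⁻¹ ≤ 1 := by
      rw [inv_le_one_iff₀]; right; exact h1
    nlinarith [sq_nonneg (1 - t⁻¹)]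

private lemma gval_le {a b : ℝ} (ha0 : 0 < a) (ha1 : a < 1) (hb0 : 0 < b) (hb1 : b < 1)
    (h : a*(1-a) ≤ b*(1-b)) : b⁻¹ + (1-b)⁻¹ ≤ a⁻¹ + (1-a)⁻¹ := by
  rw [gsum hb0 hb1, gsum ha0 ha1]
  have hpos : 0 < a * (1-a) := by nlinarith
  exact inv_anti₀ hpos h


-- Key fact 1 : phi p * (1-2p) = log(1-p) - log p
private lemma K1 {p : ℝ} (hp0 : 0 < p) (hp2 : p ≤ 1/2) :
    phi p * (1 - 2*p) = Real.log (1-p) - Real.log p := by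
  by_cases h : p = 1/2
  · subst h; norm_num
  · have hδ : (1:ℝ) - 2*p ≠ 0 := by
      intro hc; apply h; linarith
    have hp1 : 0 < 1 - p := by linarith [lt_of_le_of_ne hp2 h]
    rw [phi, if_neg h, Real.log_div hp1.ne' hp0.ne']
    field_simp

-- Key fact 2 : 2 * phi p * (p * (1-p)) ≤ 1
private lemma K2 {p : ℝ} (hp0 : 0 < p) (hp2 : p ≤ 1/2) :
    2 * phi p * (p * (1-p)) ≤ 1 := by
  by_cases h : p = 1/2
  · subst h; rw [phi, if_pos rfl]; norm_num
  · have hplt : p < 1/2 := lt_of_le_of_ne hp2 h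
    have hδ : 0 < 1 - 2*p := by linarith
    have hp1 : 0 < 1 - p := by linarith
    have hu : 1 ≤ (1-p)/p := (one_le_div hp0).mpr (by linarith)
    have hlog := log_le_half hu
    have hinv : ((1-p)/p)⁻¹ = p/(1-p) := by
      rw [inv_div]
    rw [hinv] at hlog
    have heq : ((1-p)/p - p/(1-p))/2 = (1-2*p)/(2*(p*(1-p))) := by
      field_simp
      ring
    rw [heq] at hlog
    rw [phi, if_neg h]
    have hq : 0 < p * (1-p) := mul_pos hp0 hp1
    have h2 : Real.log ((1-p)/p) * (2*(p*(1-p))) ≤ 1-2*p :=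
      (le_div_iff₀ (by positivity)).mp hlog
    rw [show 2 * (1 / (1 - 2*p) * Real.log ((1-p)/p)) * (p*(1-p))
        = (Real.log ((1-p)/p) * (2*(p*(1-p)))) / (1-2*p) by ring, div_le_one hδ]
    linarith [h2]

private lemma Gf_zero (p : ℝ) : Gf p 0 = 0 := by unfold Gf; norm_num

private lemma Gd_zero (p : ℝ) : Gd p 0 = 0 := by unfold Gd; norm_num

-- symmetry
private lemma Gf_sym {p : ℝ} (hp0 : 0 < p) (hp2 : p ≤ 1/2) (t : ℝ) :
    Gf p ((1-2*p) - t) - phi p * ((1-2*p)-t)^2 = Gf p t - phi p * t^2 := by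
  have k1 := K1 hp0 hp2
  unfold Gf
  rw [show p + ((1-2*p)-t) = 1-p-t by ring, show 1-p-((1-2*p)-t) = p+t by ring]
  linear_combination (2*t - (1-2*p)) * k1

-- core inequality : phi p * t^2 ≤ Gf p t on [0, 1-p], for p ∈ (0, 1/2]
private lemma core {p : ℝ} (hp0 : 0 < p) (hp2 : p ≤ 1/2) :
    ∀ t ∈ Icc (0:ℝ) (1-p), phi p * t^2 ≤ Gf p t := by
  set c := phi p with hc
  have k1 := K1 hp0 hp2
  have k2 := K2 hp0 hp2
  rw [← hc] at k1 k2
  have hp1 : 0 < 1 - p := by linarith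
  have hδ0 : (0:ℝ) ≤ 1 - 2*p := by linarith
  have hδle : 1 - 2*p ≤ 1 - p := by linarith
  have hδhalf : (1-2*p)/2 < 1 - p := by linarith
  have hdFG' : ∀ s : ℝ, -p < s → s < 1 - p →
      HasDerivAt (fun s => Gd p s - 2*c*s) ((p+s)⁻¹ + (1-p-s)⁻¹ - 2*c) s := by
    intro s h1 h2
    have := (hasDerivAt_Gd p s (by linarith) (by linarith)).sub
      (((hasDerivAt_id s).const_mul (2*c)))
    exact this.congr_deriv (by simp)
  have hdFG : ∀ s : ℝ, -p < s → s < 1 - p →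
      HasDerivAt (fun s => Gf p s - c*s^2) (Gd p s - 2*c*s) s := by
    intro s h1 h2
    have := (hasDerivAt_Gf p s (by linarith) (by linarith)).sub
      (((hasDerivAt_pow 2 s).const_mul c))
    refine this.congr_deriv ?_
    simp; ring
  have hmid : Gd p ((1-2*p)/2) - 2*c*((1-2*p)/2) = 0 := by
    unfold Gd
    rw [show p + (1-2*p)/2 = 1/2 by ring, show 1 - p - (1-2*p)/2 = 1/2 by ring]
    linear_combination -k1
  have hatδ : Gd p (1-2*p) - 2*c*(1-2*p) = 0 := by
    unfold Gd
    rw [show p + (1-2*p) = 1-p by ring, show 1 - p - (1-2*p) = p by ring]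
    linear_combination -2*k1
  have hq : 0 < p * (1-p) := mul_pos hp0 hp1
  have k2' : 2*c ≤ (p*(1-p))⁻¹ := by
    nlinarith [mul_le_mul_of_nonneg_right k2 (inv_nonneg.mpr hq.le), mul_inv_cancel₀ hq.ne']
  -- Step A : FG' ≥ 0 on [0, (1-2p)/2]
  have stepA : ∀ t ∈ Icc (0:ℝ) ((1-2*p)/2), 0 ≤ Gd p t - 2*c*t := by
    rintro t ⟨ht0, ht1⟩
    have htlt : t < 1 - p := lt_of_le_of_lt ht1 hδhalf
    have hpt : 0 < p + t := by linarith
    have hpt1 : p + t < 1 := by linarith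
    by_cases hcase : 2*c ≤ (p+t)⁻¹ + (1-p-t)⁻¹
    · have mono := monoOn_aux (f := fun s => Gd p s - 2*c*s)
        (f' := fun s => (p+s)⁻¹ + (1-p-s)⁻¹ - 2*c) (a := 0) (b := t)
        (fun s hs => hdFG' s (by linarith [hs.1]) (by linarith [hs.2])) ?_
      · have h0 := mono (left_mem_Icc.mpr ht0) (right_mem_Icc.mpr ht0) ht0
        simp only [Gd_zero] at h0
        linarith [h0]
      · rintro s ⟨hs0, hs1⟩
        have hfac : 0 ≤ ((p+t)-(p+s)) * (1-(p+s)-(p+t)) :=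
          mul_nonneg (by linarith) (by linarith)
        have hg := gval_le (a := p+s) (b := p+t) (by linarith) (by linarith)
          hpt hpt1 (by nlinarith)
        rw [show 1-(p+s) = 1-p-s by ring, show 1-(p+t) = 1-p-t by ring] at hg
        simp only [sub_nonneg]
        linarith [hg, hcase]
    · push_neg at hcase
      have anti := antiOn_aux (f := fun s => Gd p s - 2*c*s)
        (f' := fun s => (p+s)⁻¹ + (1-p-s)⁻¹ - 2*c) (a := t) (b := (1-2*p)/2)
        (fun s hs => hdFG' s (by linarith [hs.1]) (by linarith [hs.2])) ?_
      · have h0 := anti (left_mem_Icc.mpr ht1) (right_mem_Icc.mpr ht1) ht1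
        linarith [hmid, h0]
      · rintro s ⟨hs0, hs1⟩
        have hfac : 0 ≤ ((p+s)-(p+t)) * (1-(p+t)-(p+s)) :=
          mul_nonneg (by linarith) (by linarith)
        have hg := gval_le (a := p+t) (b := p+s) hpt hpt1 (by linarith) (by linarith)
          (by nlinarith)
        rw [show 1-(p+s) = 1-p-s by ring, show 1-(p+t) = 1-p-t by ring] at hg
        simp only [sub_nonpos]
        linarith [hg, hcase]
  -- Step AB : FG ≥ 0 on [0, 1-2p]
  have stepAB : ∀ t ∈ Icc (0:ℝ) (1-2*p), 0 ≤ Gf p t - c*t^2 := by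
    have half : ∀ t ∈ Icc (0:ℝ) ((1-2*p)/2), 0 ≤ Gf p t - c*t^2 := by
      intro t ht
      have mono := monoOn_aux (f := fun s => Gf p s - c*s^2) (f' := fun s => Gd p s - 2*c*s)
        (a := 0) (b := (1-2*p)/2)
        (fun s hs => hdFG s (by linarith [hs.1]) (by linarith [hs.2]))
        (fun s hs => stepA s ⟨hs.1.le, hs.2.le⟩)
      have h0 := mono (left_mem_Icc.mpr (by linarith [ht.1, ht.2])) ht ht.1
      simp only [Gf_zero] at h0
      linarith [h0]
    rintro t ⟨ht0, ht1⟩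
    rcases le_total t ((1-2*p)/2) with h | h
    · exact half t ⟨ht0, h⟩
    · have h2 := half ((1-2*p) - t) ⟨by linarith, by linarith⟩
      have hsym := Gf_sym hp0 hp2 t
      rw [← hc] at hsym
      linarith [h2, hsym]
  -- Step C : FG ≥ 0 on [1-2p, 1-p)
  have stepC : ∀ T ∈ Ico (1-2*p) (1-p), 0 ≤ Gf p T - c*T^2 := by
    rintro T ⟨hT0, hT1⟩
    have hFG'nonneg : ∀ s ∈ Icc (1-2*p) T, 0 ≤ Gd p s - 2*c*s := by
      intro s hs
      have mono := monoOn_aux (f := fun s => Gd p s - 2*c*s)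
        (f' := fun s => (p+s)⁻¹ + (1-p-s)⁻¹ - 2*c) (a := 1-2*p) (b := T)
        (fun u hu => hdFG' u (by linarith [hu.1]) (by linarith [hu.2])) ?_
      · have h0 := mono (left_mem_Icc.mpr hT0) hs hs.1
        dsimp only at h0
        linarith [hatδ, h0]
      · rintro u ⟨hu0, hu1⟩
        have hfac : 0 ≤ (u - (1-2*p)) * u := mul_nonneg (by linarith) (by linarith)
        have hg := gval_le (a := p+u) (b := p) (by linarith) (by linarith) hp0 (by linarith)
          (by nlinarith)
        rw [show 1-(p+u) = 1-p-u by ring] at hg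
        rw [gsum hp0 (by linarith)] at hg
        simp only [sub_nonneg]
        linarith [hg, k2']
    have mono2 := monoOn_aux (f := fun s => Gf p s - c*s^2) (f' := fun s => Gd p s - 2*c*s)
      (a := 1-2*p) (b := T)
      (fun u hu => hdFG u (by linarith [hu.1]) (by linarith [hu.2]))
      (fun u hu => hFG'nonneg u ⟨hu.1.le, hu.2.le⟩)
    have h0 := mono2 (left_mem_Icc.mpr hT0) (right_mem_Icc.mpr hT0) hT0
    dsimp only at h0
    have hbase := stepAB (1-2*p) ⟨hδ0, le_refl _⟩
    linarith [h0, hbase]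
  -- Step D : t = 1-p by continuity
  have stepD : 0 ≤ Gf p (1-p) - c*(1-p)^2 := by
    have hcont : ContinuousAt (fun t => Gf p t - c*t^2) (1-p) :=
      ((Gf_cont p).continuousAt).sub ((continuous_const.mul (continuous_pow 2)).continuousAt)
    have htend : Filter.Tendsto (fun t => Gf p t - c*t^2)
        (nhdsWithin (1-p) (Iio (1-p))) (nhds (Gf p (1-p) - c*(1-p)^2)) :=
      hcont.tendsto.mono_left nhdsWithin_le_nhds
    refine ge_of_tendsto htend ?_
    have hmem : Ico (1-2*p) (1-p) ∈ nhdsWithin (1-p) (Iio (1-p)) :=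
      Ico_mem_nhdsLT_of_mem ⟨by linarith, le_refl _⟩
    filter_upwards [hmem] with t ht using stepC t ht
  rintro t ⟨ht0, ht1⟩
  rcases eq_or_lt_of_le ht1 with heq | hlt
  · rw [heq]; linarith [stepD]
  · rcases le_or_gt t (1-2*p) with h | h
    · linarith [stepAB t ⟨ht0, h⟩]
    · linarith [stepC t ⟨h.le, hlt⟩]

private lemma D2_eq_Gf {p : ℝ} (hp0 : 0 < p) (hp1 : p < 1) {ε : ℝ} (hε0 : 0 < ε)
    (hε1 : ε ≤ 1 - p) : D2 (p + ε) p = Gf p ε := by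
  have h1 : 0 < p + ε := by linarith
  unfold D2 Gf
  rw [Real.log_div h1.ne' hp0.ne']
  rcases lt_or_eq_of_le hε1 with h | h
  · have h2 : 0 < 1 - p - ε := by linarith
    rw [show 1 - (p + ε) = 1 - p - ε by ring, Real.log_div h2.ne' (by linarith : (0:ℝ) < 1-p).ne']
    ring
  · have h2 : 1 - p - ε = 0 := by linarith
    rw [show 1 - (p + ε) = 1 - p - ε by ring, h2]
    norm_num
    ring

-- upper bound for p = 1/2 : Gf (1/2) t ≤ 2 t^2 + 6 t^4 on [0, 1/4]
private lemma up_half : ∀ t ∈ Icc (0:ℝ) (1/4), Gf (1/2) t ≤ 2*t^2 + 6*t^4 := by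
  have hdW : ∀ s : ℝ, s ∈ Icc (0:ℝ) (1/4) →
      HasDerivAt (fun s => 2*s^2 + 6*s^4 - Gf (1/2) s)
        (4*s + 24*s^3 - Gd (1/2) s) s := by
    rintro s ⟨h0, h1⟩
    have hA : HasDerivAt (fun s : ℝ => 2*s^2 + 6*s^4)
        (2*(2*s^1) + 6*(4*s^3)) s :=
      ((hasDerivAt_pow 2 s).const_mul 2).add ((hasDerivAt_pow 4 s).const_mul 6)
    have hB := hasDerivAt_Gf (1/2) s (by norm_num; linarith) (by norm_num; linarith)
    have := hA.sub hB
    refine this.congr_deriv ?_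
    ring
  have hdW' : ∀ s : ℝ, s ∈ Icc (0:ℝ) (1/4) →
      HasDerivAt (fun s => 4*s + 24*s^3 - Gd (1/2) s)
        (4 + 24*(3*s^2) - ((1/2+s)⁻¹ + (1-1/2-s)⁻¹)) s := by
    rintro s ⟨h0, h1⟩
    have hA : HasDerivAt (fun s : ℝ => 4*s + 24*s^3) (4*1 + 24*(3*s^2)) s :=
      ((hasDerivAt_id s).const_mul 4).add ((hasDerivAt_pow 3 s).const_mul 24)
    have hB := hasDerivAt_Gd (1/2) s (by norm_num; linarith) (by norm_num; linarith)
    have := hA.sub hB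
    refine this.congr_deriv ?_
    ring
  -- W' ≥ 0 on [0, 1/4]
  have hW' : ∀ s ∈ Icc (0:ℝ) (1/4), 0 ≤ 4*s + 24*s^3 - Gd (1/2) s := by
    intro s hs
    have mono := monoOn_aux (f := fun s => 4*s + 24*s^3 - Gd (1/2) s)
      (f' := fun s => 4 + 24*(3*s^2) - ((1/2+s)⁻¹ + (1-1/2-s)⁻¹)) hdW' ?_
    · have h0 := mono (left_mem_Icc.mpr (by norm_num)) hs hs.1
      dsimp only at h0
      have hgd0 : Gd (1/2) (0:ℝ) = 0 := Gd_zero (1/2)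
      rw [hgd0] at h0
      linarith [h0]
    · rintro u ⟨hu0, hu1⟩
      have e1 : ((1:ℝ)/2+u)⁻¹ + (1-1/2-u)⁻¹ = ((1/2+u)*(1-(1/2+u)))⁻¹ := by
        rw [show (1:ℝ)-1/2-u = 1-(1/2+u) by ring, gsum (by linarith) (by linarith)]
      rw [e1]
      have hpos : (0:ℝ) < (1/2+u)*(1-(1/2+u)) := by nlinarith
      have hu2 : u^2 < 1/16 := by nlinarith
      have h3 : 72*u^2*u^2 ≤ 72*u^2*(1/16) :=
        mul_le_mul_of_nonneg_left hu2.le (by positivity)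
      have key : (1:ℝ) ≤ (4 + 72*u^2) * ((1/2+u)*(1-(1/2+u))) := by nlinarith [h3, sq_nonneg u]
      have h2 : ((1/2+u)*(1-(1/2+u)))⁻¹ ≤ 4 + 72*u^2 := by
        rw [inv_le_iff_one_le_mul₀' hpos]
        linarith [key]
      nlinarith [h2]
  intro t ht
  have mono := monoOn_aux (f := fun s => 2*s^2 + 6*s^4 - Gf (1/2) s)
    (f' := fun s => 4*s + 24*s^3 - Gd (1/2) s) hdW
    (fun s hs => hW' s ⟨hs.1.le, hs.2.le⟩)
  have h0 := mono (left_mem_Icc.mpr (by norm_num)) ht ht.1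
  dsimp only at h0
  have hgf0 : Gf (1/2) (0:ℝ) = 0 := Gf_zero (1/2)
  rw [hgf0] at h0
  linarith [h0]


/-- Hoeffding's optimal quadratic bound on binary divergence. -/
theorem stmt10 (p : ℝ) (hp : p ∈ Set.Icc (0 : ℝ) (1 / 2)) :
    (⨅ ε : Set.Ioc (0 : ℝ) (1 - p), D2 (p + ε.1) p / ε.1 ^ 2) = phi p := by
  obtain ⟨hp0, hp2⟩ := hp
  rcases eq_or_lt_of_le hp0 with h0 | h0
  · -- p = 0 : both sides are junk `0`
    subst h0
    have hphi : phi 0 = 0 := by rw [phi]; norm_num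
    rw [hphi]
    apply Real.iInf_of_not_bddBelow
    rintro ⟨b, hb⟩
    have hbpos : (0:ℝ) < |b| + 1 := by positivity
    set ε : ℝ := min (1/2) (1/(2*(|b|+1))) with hεdef
    have hε0 : 0 < ε := lt_min (by norm_num) (by positivity)
    have hεhalf : ε ≤ 1/2 := min_le_left _ _
    have hε1 : ε ≤ 1 - 0 := by linarith
    have hval := hb (Set.mem_range_self (⟨ε, hε0, hε1⟩ : Set.Ioc (0:ℝ) (1-0)))
    dsimp only at hval
    have hd : D2 (0+ε) 0 = (1-ε)*Real.log (1-ε) := by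
      unfold D2
      rw [zero_add, div_zero, Real.log_zero, sub_zero, div_one]
      ring
    have hlog : Real.log (1-ε) ≤ -ε := by
      have := Real.log_le_sub_one_of_pos (by linarith : (0:ℝ) < 1-ε)
      linarith
    have hD : D2 (0+ε) 0 ≤ -ε/2 := by
      rw [hd]; nlinarith [hlog]
    have hdiv : D2 (0+ε) 0 / ε^2 ≤ (-ε/2)/ε^2 :=
      (div_le_div_iff_of_pos_right (by positivity)).mpr hD
    have heq2 : (-ε/2)/ε^2 = -(1/(2*ε)) := by
      field_simp
    have hεb : ε ≤ 1/(2*(|b|+1)) := min_le_right _ _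
    have hkey : |b| + 1 ≤ 1/(2*ε) := by
      rw [le_div_iff₀ (by positivity)]
      rw [le_div_iff₀ (by positivity)] at hεb
      nlinarith [hεb]
    have hnb : -|b| ≤ b := neg_abs_le b
    linarith [hval, hdiv, heq2 ▸ hdiv, hkey, hnb]
  · -- 0 < p
    have hp1 : 0 < 1 - p := by linarith
    haveI hne : Nonempty (Set.Ioc (0:ℝ) (1-p)) := ⟨⟨1-p, hp1, le_refl _⟩⟩
    have hlow : ∀ ε : Set.Ioc (0:ℝ) (1-p), phi p ≤ D2 (p + ε.1) p / ε.1^2 := by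
      rintro ⟨ε, hε0, hε1⟩
      dsimp only
      rw [D2_eq_Gf h0 (by linarith) hε0 hε1, le_div_iff₀ (by positivity)]
      exact core h0 hp2 ε ⟨hε0.le, hε1⟩
    have hbdd : BddBelow (Set.range fun ε : Set.Ioc (0:ℝ) (1-p) => D2 (p + ε.1) p / ε.1^2) := by
      refine ⟨phi p, ?_⟩
      rintro x ⟨ε, rfl⟩
      exact hlow ε
    refine le_antisymm ?_ (le_ciInf hlow)
    rcases eq_or_lt_of_le hp2 with hhalf | hhalf
    · -- p = 1/2
      subst hhalf
      rw [show phi (1/2) = 2 by rw [phi]; norm_num]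
      apply le_of_forall_pos_le_add
      intro η hη
      have ht0 : 0 < min (1/4) (Real.sqrt (η/6)) :=
        lt_min (by norm_num) (Real.sqrt_pos.mpr (by positivity))
      set t : ℝ := min (1/4) (Real.sqrt (η/6)) with htdef
      have ht4 : t ≤ 1/4 := min_le_left _ _
      have htm : t ≤ 1 - 1/2 := by
        have : (1:ℝ) - 1/2 = 1/2 := by norm_num
        linarith
      have hsq : 6*t^2 ≤ η := by
        have h1 : t ≤ Real.sqrt (η/6) := min_le_right _ _
        have h2 : t^2 ≤ (Real.sqrt (η/6))^2 := by nlinarith [ht0.le]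
        rw [Real.sq_sqrt (by positivity : (0:ℝ) ≤ η/6)] at h2
        linarith
      have key := up_half t ⟨ht0.le, ht4⟩
      have step1 := ciInf_le hbdd (⟨t, ht0, htm⟩ : Set.Ioc (0:ℝ) (1-1/2))
      dsimp only at step1
      rw [D2_eq_Gf (by norm_num) (by norm_num) ht0 htm] at step1
      have step2 : Gf (1/2) t / t^2 ≤ (2*t^2 + 6*t^4)/t^2 :=
        (div_le_div_iff_of_pos_right (by positivity)).mpr key
      have step3 : (2*t^2 + 6*t^4)/t^2 = 2 + 6*t^2 := by
        field_simp
      linarith [step1, step2, step3 ▸ step2, hsq]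
    · -- p < 1/2 : the infimum is attained at ε = 1-2p
      have hδ0 : 0 < 1-2*p := by linarith
      have hδm : 1-2*p ≤ 1-p := by linarith
      have step1 := ciInf_le hbdd (⟨1-2*p, hδ0, hδm⟩ : Set.Ioc (0:ℝ) (1-p))
      dsimp only at step1
      rw [D2_eq_Gf h0 (by linarith) hδ0 hδm] at step1
      have hGf : Gf p (1-2*p) = phi p * (1-2*p)^2 := by
        unfold Gf
        rw [show p + (1-2*p) = 1-p by ring, show 1-p-(1-2*p) = p by ring]
        linear_combination (2*p-1) * (K1 h0 hp2)
      rw [hGf] at step1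
      have : phi p * (1-2*p)^2 / (1-2*p)^2 = phi p := by
        field_simp
      linarith [step1, this ▸ step1]

end AuxStmt10
end

section
/- For p ∈ [0, 1/2] and ε ≥ 0 with p + ε ≤ 1, the binary relative entropy satisfies D_2(p + ε ‖ p) ≤ D_2(1 − p + ε ‖ 1 − p) (whenever 1−p+ε ≤ 1, i.e. ε ≤ p). -/
open Matrix MeasureTheory Filter
open scoped BigOperators ComplexOrder

private lemma artanh_ge (u : ℝ) (h0 : 0 ≤ u) (h1 : u < 1) :
    2 * u ≤ Real.log (1 + u) - Real.log (1 - u) := by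
  set f : ℝ → ℝ := fun x => Real.log (1 + x) - Real.log (1 - x) - 2 * x with hf
  have hder : ∀ x ∈ Set.Icc (0 : ℝ) u,
      HasDerivAt f ((1 + x)⁻¹ * 1 - (1 - x)⁻¹ * (-1) - 2) x := by
    intro x hx
    have hx1 : (0 : ℝ) < 1 + x := by linarith [hx.1]
    have hx2 : (0 : ℝ) < 1 - x := by linarith [hx.2, h1]
    have d1 : HasDerivAt (fun x : ℝ => Real.log (1 + x)) ((1 + x)⁻¹ * 1) x :=
      (Real.hasDerivAt_log hx1.ne').comp x (by simpa using (hasDerivAt_id x).const_add 1)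
    have d2 : HasDerivAt (fun x : ℝ => Real.log (1 - x)) ((1 - x)⁻¹ * (-1)) x :=
      (Real.hasDerivAt_log hx2.ne').comp x (by simpa using (hasDerivAt_id x).const_sub 1)
    have d3 : HasDerivAt (fun x : ℝ => 2 * x) 2 x := by
      simpa using (hasDerivAt_id x).const_mul 2
    exact (d1.sub d2).sub d3
  have mono : MonotoneOn f (Set.Icc 0 u) := by
    apply monotoneOn_of_deriv_nonneg (convex_Icc 0 u)
    · intro x hx
      exact (hder x hx).differentiableAt.continuousAt.continuousWithinAt
    · intro x hx
      exact ((hder x (interior_subset hx)).differentiableAt).differentiableWithinAt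
    · intro x hx
      have hx' := interior_subset hx
      rw [(hder x hx').deriv]
      have hx1 : (0 : ℝ) < 1 + x := by linarith [hx'.1]
      have hx2 : (0 : ℝ) < 1 - x := by linarith [hx'.2, h1]
      have key : (1 + x)⁻¹ * 1 - (1 - x)⁻¹ * (-1) - 2
          = 2 * x ^ 2 / ((1 + x) * (1 - x)) := by
        field_simp
        ring
      rw [key]
      positivity
  have h0u : (0 : ℝ) ∈ Set.Icc (0 : ℝ) u := Set.left_mem_Icc.mpr h0
  have huu : u ∈ Set.Icc (0 : ℝ) u := Set.right_mem_Icc.mpr h0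
  have := mono h0u huu h0
  simp [hf] at this
  linarith

private lemma log_gap (ε t : ℝ) (hε : 0 < ε) (ht : ε < t) :
    2 * ε / t ≤ Real.log (t + ε) - Real.log (t - ε) := by
  have ht0 : 0 < t := hε.trans ht
  have hu1 : ε / t < 1 := (div_lt_one ht0).mpr ht
  have h1 : Real.log (t + ε) = Real.log t + Real.log (1 + ε / t) := by
    rw [← Real.log_mul ht0.ne' (by positivity)]
    congr 1
    field_simp
  have h2 : Real.log (t - ε) = Real.log t + Real.log (1 - ε / t) := by
    rw [← Real.log_mul ht0.ne' (sub_pos.mpr hu1).ne']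
    congr 1
    field_simp
  have key := artanh_ge (ε / t) (by positivity) hu1
  have : 2 * ε / t = 2 * (ε / t) := by ring
  rw [h1, h2, this]
  linarith

private lemma G_mono (ε : ℝ) (hε : 0 < ε) :
    MonotoneOn (fun t => (t + ε) * Real.log (t + ε) - (t - ε) * Real.log (t - ε)
      - 2 * ε * Real.log t) (Set.Ici ε) := by
  have hder : ∀ t ∈ interior (Set.Ici ε),
      HasDerivAt (fun t : ℝ => (t + ε) * Real.log (t + ε) - (t - ε) * Real.log (t - ε)
        - 2 * ε * Real.log t)
      (Real.log (t + ε) - Real.log (t - ε) - 2 * ε / t) t := by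
    intro t ht
    rw [interior_Ici] at ht
    have htε : ε < t := ht
    have ht0 : 0 < t := hε.trans htε
    have hp : (0 : ℝ) < t + ε := by linarith
    have hm : (0 : ℝ) < t - ε := by linarith
    have d1 : HasDerivAt (fun t : ℝ => (t + ε) * Real.log (t + ε))
        (1 * Real.log (t + ε) + (t + ε) * ((t + ε)⁻¹ * 1)) t :=
      ((hasDerivAt_id t).add_const ε).mul
        (by have := (Real.hasDerivAt_log hp.ne').comp t ((hasDerivAt_id t).add_const ε); exact this)
    have d2 : HasDerivAt (fun t : ℝ => (t - ε) * Real.log (t - ε))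
        (1 * Real.log (t - ε) + (t - ε) * ((t - ε)⁻¹ * 1)) t :=
      ((hasDerivAt_id t).sub_const ε).mul
        (by have := (Real.hasDerivAt_log hm.ne').comp t ((hasDerivAt_id t).sub_const ε); exact this)
    have d3 : HasDerivAt (fun t : ℝ => 2 * ε * Real.log t) (2 * ε * t⁻¹) t :=
      (Real.hasDerivAt_log ht0.ne').const_mul (2 * ε)
    have D := (d1.sub d2).sub d3
    refine D.congr_deriv ?_
    rw [mul_one, mul_one, mul_inv_cancel₀ hp.ne', mul_inv_cancel₀ hm.ne', div_eq_mul_inv]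
    ring
  apply monotoneOn_of_deriv_nonneg (convex_Ici ε)
  · apply ContinuousOn.sub
    · apply Continuous.continuousOn
      exact (Real.continuous_mul_log.comp (continuous_id.add continuous_const)).sub
        (Real.continuous_mul_log.comp (continuous_id.sub continuous_const))
    · exact continuousOn_const.mul (Real.continuousOn_log.mono fun x hx => by
        simp only [Set.mem_compl_iff, Set.mem_singleton_iff]
        have : ε ≤ x := hx
        exact (hε.trans_le this).ne')
  · intro t ht
    exact (hder t ht).differentiableAt.differentiableWithinAt
  · intro t ht
    rw [(hder t ht).deriv]
    rw [interior_Ici] at ht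
    have hgap := log_gap ε t hε ht
    linarith

private lemma D2_split (ε t : ℝ) (hε : 0 < ε) (ht : ε ≤ t) :
    (t + ε) * Real.log ((t + ε) / t) - (t - ε) * Real.log ((t - ε) / t)
      = (t + ε) * Real.log (t + ε) - (t - ε) * Real.log (t - ε) - 2 * ε * Real.log t := by
  have ht0 : 0 < t := lt_of_lt_of_le hε ht
  have hA : Real.log ((t + ε) / t) = Real.log (t + ε) - Real.log t :=
    Real.log_div (by positivity) ht0.ne'
  rcases eq_or_lt_of_le ht with h | h
  · subst h
    rw [hA]
    simp
    ring
  · have hB : Real.log ((t - ε) / t) = Real.log (t - ε) - Real.log t :=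
      Real.log_div (by linarith [sub_pos.mpr h] : t - ε ≠ 0) ht0.ne'
    rw [hA, hB]
    ring

private lemma D2_self (x : ℝ) : D2 x x = 0 := by
  unfold D2
  rcases eq_or_ne x 0 with h | h
  · simp [h]
  rcases eq_or_ne (1 - x) 0 with h1 | h1
  · simp [h1, div_self h]
  · simp [div_self h, div_self h1]

/-- monotonicity of binary relative entropy under reflection. -/
theorem stmt11 (p ε : ℝ) (hp : p ∈ Set.Icc (0 : ℝ) (1 / 2)) (hε : 0 ≤ ε) (hεp : ε ≤ p) :
    D2 (p + ε) p ≤ D2 (1 - p + ε) (1 - p) := by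
  rcases eq_or_lt_of_le hε with h | hε'
  · rw [← h, add_zero, add_zero, D2_self, D2_self]
  · have hp0 : 0 < p := lt_of_lt_of_le hε' hεp
    have hple : p ≤ 1 - p := by have := hp.2; linarith
    have h1p : ε ≤ 1 - p := le_trans hεp hple
    have key := G_mono ε hε' (Set.mem_Ici.mpr hεp) (Set.mem_Ici.mpr h1p) hple
    simp only at key
    have e1 := D2_split ε p hε' hεp
    have e2 := D2_split ε (1 - p) hε' h1p
    unfold D2
    have r1 : 1 - (p + ε) = 1 - p - ε := by ring
    have r2 : 1 - (1 - p + ε) = p - ε := by ring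
    have r3 : 1 - (1 - p) = p := by ring
    rw [r1, r2, r3]
    linarith
end

section
/- The function φ: [0, 1/2] → R defined by φ(p) = (1/(1−2p)) log((1−p)/p) for p < 1/2 and φ(1/2) = 2 is continuous and strictly decreasing, and satisfies φ(p) ≥ 2 for all p, with φ(p) → +∞ as p → 0. -/
open Matrix MeasureTheory Filter
open scoped BigOperators ComplexOrder

open Set Topology in
section

open Set Topology

noncomputable def Lf (p : ℝ) : ℝ := Real.log (1 - p) - Real.log p

lemma hasDerivAt_Lf {p : ℝ} (h0 : 0 < p) (h1 : p < 1) :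
    HasDerivAt Lf (-(1 - p)⁻¹ - p⁻¹) p := by
  have h1' : (1:ℝ) - p ≠ 0 := by intro h; linarith [h]
  have hlog1 : HasDerivAt (fun x : ℝ => Real.log (1 - x)) (-(1 - p)⁻¹) p := by
    have h := (Real.hasDerivAt_log h1').comp p ((hasDerivAt_id' (𝕜 := ℝ) (x := p)).const_sub 1)
    simpa [Function.comp_def] using h
  exact hlog1.sub (Real.hasDerivAt_log h0.ne')


lemma phi_eq {p : ℝ} (h0 : 0 < p) (h1 : p < 1/2) : phi p = Lf p / (1 - 2*p) := by
  rw [phi, if_neg h1.ne, Real.log_div (by intro h; linarith) h0.ne', one_div_mul_eq_div, Lf]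

lemma hasDerivAt_kf {p : ℝ} (h0 : 0 < p) (h1 : p < 1) :
    HasDerivAt (fun x : ℝ => (1 - 2*x)/(x*(1-x)) - 2 * Lf x)
      (-(1-2*p)^2/(p*(1-p))^2) p := by
  have h1' : (1:ℝ) - p ≠ 0 := by intro h; linarith
  have hD : HasDerivAt (fun x : ℝ => x*(1-x)) (1*(1-p) + p*(-1)) p := by
    exact (hasDerivAt_id' (𝕜 := ℝ) (x := p)).mul ((hasDerivAt_id' (𝕜 := ℝ) (x := p)).const_sub 1)
  have hN : HasDerivAt (fun x : ℝ => 1 - 2*x) (-(2*1)) p :=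
    ((hasDerivAt_id' (𝕜 := ℝ) (x := p)).const_mul 2).const_sub 1
  have hDne : p * (1-p) ≠ 0 := mul_ne_zero h0.ne' h1'
  have hdiv := hN.div hD hDne
  have hfull : HasDerivAt (fun x : ℝ => (1 - 2*x)/(x*(1-x)) - 2 * Lf x) _ p := hdiv.sub ((hasDerivAt_Lf h0 h1).const_mul 2)
  convert hfull using 1
  field_simp
  ring

lemma key_ineq {p : ℝ} (h0 : 0 < p) (h1 : p < 1/2) :
    2 * Lf p < (1 - 2*p)/(p*(1-p)) := by
  have hanti : StrictAntiOn (fun x : ℝ => (1 - 2*x)/(x*(1-x)) - 2 * Lf x) (Set.Ioc 0 (1/2)) := by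
    apply strictAntiOn_of_deriv_neg (convex_Ioc _ _)
    · intro x hx
      exact (hasDerivAt_kf hx.1 (by have := hx.2; linarith)).continuousAt.continuousWithinAt
    · intro x hx
      rw [interior_Ioc] at hx
      rw [(hasDerivAt_kf hx.1 (by have := hx.2; linarith)).deriv]
      apply div_neg_of_neg_of_pos
      · have h2 : (0:ℝ) < (1-2*x)^2 := by
          have : (1:ℝ) - 2*x ≠ 0 := by have := hx.2; intro h; linarith
          positivity
        linarith
      · have hx1 : x * (1-x) > 0 := by have := hx.1; have := hx.2; nlinarith
        positivity
  have h := hanti ⟨h0, h1.le⟩ ⟨by norm_num, le_refl _⟩ h1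
  have hval : (1 - 2*(1/2:ℝ))/((1/2:ℝ)*(1-1/2)) - 2 * Lf (1/2) = 0 := by
    norm_num [Lf]
  simp only at h
  rw [hval] at h
  linarith

lemma Lf_gt {p : ℝ} (h0 : 0 < p) (h1 : p < 1/2) : 2*(1-2*p) < Lf p := by
  have hanti : StrictAntiOn (fun x : ℝ => Lf x - 2*(1-2*x)) (Set.Ioc 0 (1/2)) := by
    apply strictAntiOn_of_deriv_neg (convex_Ioc _ _)
    · intro x hx
      exact (((hasDerivAt_Lf hx.1 (by have := hx.2; linarith)).sub
        (((hasDerivAt_id' (𝕜 := ℝ) (x := x)).const_mul 2).const_sub 1 |>.const_mul 2)).continuousAt).continuousWithinAt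
    · intro x hx
      rw [interior_Ioc] at hx
      have h0x := hx.1
      have h1x := hx.2
      have h1' : (0:ℝ) < 1 - x := by linarith
      rw [(show HasDerivAt (fun x => Lf x - 2*(1-2*x)) _ x from ((hasDerivAt_Lf h0x (by linarith)).sub
        (((hasDerivAt_id' (𝕜 := ℝ) (x := x)).const_mul 2).const_sub 1 |>.const_mul 2))).deriv]
      have heq : -(1-x)⁻¹ - x⁻¹ - 2 * -(2*1) = -(1-2*x)^2/(x*(1-x)) := by
        field_simp
        ring
      rw [heq]
      apply div_neg_of_neg_of_pos
      · have h2 : (0:ℝ) < (1-2*x)^2 := by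
          have : (1:ℝ) - 2*x ≠ 0 := by intro h; linarith
          positivity
        linarith
      · positivity
  have h := hanti ⟨h0, h1.le⟩ ⟨by norm_num, le_refl _⟩ h1
  have hval : Lf (1/2:ℝ) - 2*(1-2*(1/2:ℝ)) = 0 := by norm_num [Lf]
  simp only at h
  rw [hval] at h
  linarith

lemma hasDerivAt_phi {p : ℝ} (h0 : 0 < p) (h1 : p < 1/2) :
    HasDerivAt phi (((-(1-p)⁻¹ - p⁻¹) * (1 - 2*p) - Lf p * (-(2*1)))/(1-2*p)^2) p := by
  have hne : (1:ℝ) - 2*p ≠ 0 := by intro h; linarith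
  have hF : HasDerivAt (fun x => Lf x / (1 - 2*x))
      (((-(1-p)⁻¹ - p⁻¹) * (1 - 2*p) - Lf p * (-(2*1)))/(1-2*p)^2) p :=
    (hasDerivAt_Lf h0 (by linarith)).div
      (((hasDerivAt_id' (𝕜 := ℝ) (x := p)).const_mul 2).const_sub 1) hne
  apply hF.congr_of_eventuallyEq
  filter_upwards [isOpen_Ioo.mem_nhds (⟨h0, h1⟩ : p ∈ Ioo 0 (1/2 : ℝ))] with y hy
  exact phi_eq hy.1 hy.2

lemma deriv_phi_neg {p : ℝ} (h0 : 0 < p) (h1 : p < 1/2) : deriv phi p < 0 := by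
  rw [(hasDerivAt_phi h0 h1).deriv]
  have h1' : (0:ℝ) < 1 - p := by linarith
  apply div_neg_of_neg_of_pos
  · have hk := key_ineq h0 h1
    have hpq : (0:ℝ) < p * (1 - p) := by positivity
    have heq : (-(1-p)⁻¹ - p⁻¹) * (1 - 2*p) = -((1-2*p)/(p*(1-p))) := by
      field_simp; ring
    rw [heq]
    linarith
  · have : (1:ℝ) - 2*p ≠ 0 := by intro h; linarith
    positivity

lemma phi_half : phi (1/2 : ℝ) = 2 := if_pos rfl

lemma continuousWithinAt_phi_half : ContinuousWithinAt phi (Set.Ioc 0 (1/2)) (1/2 : ℝ) := by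
  rw [← continuousWithinAt_diff_self]
  have hd : HasDerivAt Lf (-4) (1/2 : ℝ) := by
    have := hasDerivAt_Lf (by norm_num : (0:ℝ) < 1/2) (by norm_num : (1/2:ℝ) < 1)
    norm_num at this
    exact this
  have hslope : Tendsto (slope Lf (1/2)) (𝓝[≠] (1/2:ℝ)) (𝓝 (-4)) :=
    hasDerivAt_iff_tendsto_slope.mp hd
  have hT : Tendsto (fun y => slope Lf (1/2:ℝ) y * (-1/2)) (𝓝[≠] (1/2:ℝ)) (𝓝 2) := by
    have h := hslope.mul_const (-1/2 : ℝ)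
    have : ((-4:ℝ) * (-1/2)) = 2 := by norm_num
    rwa [this] at h
  unfold ContinuousWithinAt
  rw [phi_half]
  have hsub : Set.Ioc (0:ℝ) (1/2) \ {1/2} ⊆ {(1/2 : ℝ)}ᶜ := fun y hy => hy.2
  refine Tendsto.congr' ?_ (hT.mono_left (nhdsWithin_mono _ hsub))
  filter_upwards [self_mem_nhdsWithin] with y hy
  have hy1 : y < 1/2 := lt_of_le_of_ne hy.1.2 (by simpa using hy.2)
  have hy0 : 0 < y := hy.1.1
  rw [slope_def_field, phi_eq hy0 hy1]
  have hLhalf : Lf (1/2 : ℝ) = 0 := by norm_num [Lf]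
  rw [hLhalf]
  have h1 : y - 1/2 ≠ 0 := by intro h; linarith
  have h2 : (1:ℝ) - 2*y ≠ 0 := by intro h; linarith
  have h3 : (-2 + y*4 : ℝ) ≠ 0 := by intro h; apply h2; linarith
  field_simp
  ring_nf
  rw [show (-1 + y*2 : ℝ) = -(1 - y*2) by ring, inv_neg]
  ring

lemma continuousOn_phi : ContinuousOn phi (Set.Ioc 0 (1/2)) := by
  intro x hx
  rcases eq_or_lt_of_le hx.2 with h | h
  · rw [h]; exact continuousWithinAt_phi_half
  · exact (hasDerivAt_phi hx.1 h).continuousAt.continuousWithinAt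

lemma phi_ge_two {p : ℝ} (hp : p ∈ Set.Ioc (0:ℝ) (1/2)) : 2 ≤ phi p := by
  rcases eq_or_lt_of_le hp.2 with h | h
  · rw [h, phi_half]
  · rw [phi_eq hp.1 h]
    have hne : (0:ℝ) < 1 - 2*p := by linarith
    rw [le_div_iff₀ hne]
    have := Lf_gt hp.1 h
    linarith

lemma tendsto_phi_zero : Tendsto phi (𝓝[>] (0:ℝ)) atTop := by
  have hlogp : Tendsto (fun p : ℝ => -Real.log p) (𝓝[>] (0:ℝ)) atTop := by
    have := Real.tendsto_log_nhdsGT_zero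
    exact tendsto_neg_atBot_atTop.comp this
  have hlog1 : Tendsto (fun p : ℝ => Real.log (1 - p)) (𝓝[>] (0:ℝ)) (𝓝 0) := by
    have hc : ContinuousAt (fun p : ℝ => Real.log (1 - p)) 0 := by
      apply (Real.continuousAt_log (by norm_num)).comp
      fun_prop
    have h2 : Tendsto (fun p : ℝ => Real.log (1 - p)) (𝓝[>] (0:ℝ)) (𝓝 (Real.log (1 - 0))) :=
      hc.tendsto.mono_left nhdsWithin_le_nhds
    simpa using h2
  have hL : Tendsto Lf (𝓝[>] (0:ℝ)) atTop := by
    have := hlogp.atTop_add hlog1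
    refine this.congr fun p => ?_
    simp [Lf]; ring
  apply tendsto_atTop_mono' _ _ hL
  filter_upwards [Ioo_mem_nhdsGT_of_mem (by norm_num : (0:ℝ) ∈ Ico (0:ℝ) (1/2))] with p hp
  rw [phi_eq hp.1 hp.2]
  have h2 : (0:ℝ) < 1 - 2*p := by have := hp.2; linarith
  rw [le_div_iff₀ h2]
  have hLnn : 0 ≤ Lf p := by
    have := Lf_gt hp.1 hp.2
    have := hp.2
    linarith
  nlinarith [hp.1, hp.2]


/-- `φ` is continuous, strictly decreasing, at least `2`, and blows up
at `0`. -/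
theorem stmt12 :
    ContinuousOn phi (Set.Ioc (0 : ℝ) (1 / 2)) ∧
    StrictAntiOn phi (Set.Ioc (0 : ℝ) (1 / 2)) ∧
    (∀ p ∈ Set.Ioc (0 : ℝ) (1 / 2), 2 ≤ phi p) ∧
    Filter.Tendsto phi (nhdsWithin 0 (Set.Ioi 0)) Filter.atTop := by
  refine ⟨continuousOn_phi, ?_, fun p hp => phi_ge_two hp, tendsto_phi_zero⟩
  apply strictAntiOn_of_deriv_neg (convex_Ioc _ _) continuousOn_phi
  intro x hx
  rw [interior_Ioc] at hx
  exact deriv_phi_neg hx.1 hx.2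

end
end
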